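/- arXiv:1601.03475 — 5 statements merged into one kernel-verified Lean document; each statement's English description precedes it below -/
import Mathlib

section
/- Let (M, ≤, u) be a scaled partially ordered abelian semigroup, let G be the Grothendieck group of M with natural map γ : M → G, ordered by the cone G₊ = {γ(y) − γ(x) : x, y ∈ M, x ≤ y}, with order unit γ(u). Then for every state s on (M, ≤, u) the formula s′(γ(x) − γ(y)) = s(x) − s(y) gives a well-defined state s′ on (G, G₊, γ(u)); conversely, for every state s′ on (G, G₊, γ(u)) the map x ↦ s′(γ(x)) is a state on (M, ≤, u); and the assignment s ↦ s′ is an affine bijection between S(M, ≤, u) and the set of states on (G, G₊, γ(u)) which is a homeomorphism with respect to the topologies of pointwise convergence on both sides. -/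
/-- A state on a scaled partially ordered abelian semigroup `(M, ≤, u)`. -/
def IsState {M : Type*} [AddCommMonoid M] [PartialOrder M] (u : M) (s : M → ℝ) : Prop :=
  s 0 = 0 ∧ (∀ x y : M, s (x + y) = s x + s y) ∧
    (∀ x y : M, x ≤ y → s x ≤ s y) ∧ s u = 1

/-- The state space `S(M, ≤, u)`, a subset of `M → ℝ` with the topology of
pointwise convergence. -/
def StateSpace (M : Type*) [AddCommMonoid M] [PartialOrder M] (u : M) : Set (M → ℝ) :=
  {s | IsState u s}

/-- The positive cone `G₊ = {γ y - γ x : x, y ∈ M, x ≤ y}` of the Grothendieck group. -/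
def GrothendieckCone {M G : Type*} [AddCommMonoid M] [PartialOrder M] [AddCommGroup G]
    (γ : M →+ G) : Set G :=
  {g | ∃ x y : M, x ≤ y ∧ g = γ y - γ x}

/-- A state on `(G, G₊, e)`: an additive map `s' : G → ℝ` which is nonnegative on
`G₊` and satisfies `s' e = 1`. -/
def IsGroupState {G : Type*} [AddCommGroup G] (Gpos : Set G) (e : G) (s' : G → ℝ) : Prop :=
  (∀ g h : G, s' (g + h) = s' g + s' h) ∧ (∀ g ∈ Gpos, 0 ≤ s' g) ∧ s' e = 1

/-- The state space of `(G, G₊, e)`, a subset of `G → ℝ` with the topology of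
pointwise convergence. -/
def GroupStateSpace (G : Type*) [AddCommGroup G] (Gpos : Set G) (e : G) : Set (G → ℝ) :=
  {s' | IsGroupState Gpos e s'}

/-- Let `(M, ≤, u)` be a scaled partially ordered abelian semigroup and let
`γ : M → G` be its Grothendieck group (characterized by: every element of `G` is a
difference `γ x - γ y`, and `γ x = γ y` iff `x + z = y + z` for some `z`), ordered by
the cone `G₊ = {γ y - γ x : x ≤ y}` with order unit `γ u`. Then:
(1) every state `s` on `(M, ≤, u)` gives a well-defined state `s'` on `(G, G₊, γ u)`
via `s' (γ x - γ y) = s x - s y`;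
(2) conversely, for every state `s'` on `(G, G₊, γ u)` the map `x ↦ s' (γ x)` is a
state on `(M, ≤, u)`;
(3) the assignment `s ↦ s'` is an affine bijection between the two state spaces and a
homeomorphism for the topologies of pointwise convergence. -/
theorem stateSpace_equiv_grothendieckStateSpace
    {M G : Type*} [AddCommMonoid M] [PartialOrder M] [AddCommGroup G]
    (hpos : ∀ a : M, 0 ≤ a)
    (hadd : ∀ a b c : M, a ≤ b → a + c ≤ b + c)
    (u : M) (hu : ∀ x : M, ∃ n : ℕ, x ≤ n • u)
    (γ : M →+ G)
    (hγsurj : ∀ g : G, ∃ x y : M, g = γ x - γ y)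
    (hγker : ∀ x y : M, γ x = γ y ↔ ∃ z : M, x + z = y + z) :
    (∀ s ∈ StateSpace M u, ∃ s' ∈ GroupStateSpace G (GrothendieckCone γ) (γ u),
        ∀ x y : M, s' (γ x - γ y) = s x - s y) ∧
    (∀ s' ∈ GroupStateSpace G (GrothendieckCone γ) (γ u),
        (fun x : M => s' (γ x)) ∈ StateSpace M u) ∧
    ∃ T : StateSpace M u ≃ GroupStateSpace G (GrothendieckCone γ) (γ u),
      (∀ s : StateSpace M u, ∀ x y : M,
          (T s : G → ℝ) (γ x - γ y) = (s : M → ℝ) x - (s : M → ℝ) y) ∧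
      (∀ s₁ s₂ : StateSpace M u, ∀ t : ℝ, 0 ≤ t → t ≤ 1 →
        ∀ h : t • (s₁ : M → ℝ) + (1 - t) • (s₂ : M → ℝ) ∈ StateSpace M u,
          ((T ⟨t • (s₁ : M → ℝ) + (1 - t) • (s₂ : M → ℝ), h⟩ : G → ℝ))
            = t • (T s₁ : G → ℝ) + (1 - t) • (T s₂ : G → ℝ)) ∧
      Continuous T ∧ Continuous T.symm := by
  classical
  choose p q hpq using hγsurj
  -- key well-definedness lemma
  have hkey : ∀ s : M → ℝ, IsState u s → ∀ x y a b : M,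
      γ x - γ y = γ a - γ b → s x - s y = s a - s b := by
    intro s hs x y a b h
    obtain ⟨h0, haddS, hmono, hu1⟩ := hs
    have h1 : γ (x + b) = γ (a + y) := by
      rw [map_add, map_add]
      exact sub_eq_sub_iff_add_eq_add.mp h
    obtain ⟨z, hz⟩ := (hγker _ _).mp h1
    have := congrArg s hz
    rw [haddS, haddS, haddS, haddS] at this
    linarith
  set Φ : (M → ℝ) → (G → ℝ) := fun s g => s (p g) - s (q g) with hΦ
  have hΦeq : ∀ s : M → ℝ, IsState u s → ∀ x y : M, Φ s (γ x - γ y) = s x - s y := by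
    intro s hs x y
    exact hkey s hs _ _ x y (hpq (γ x - γ y)).symm
  have hΦγ : ∀ s : M → ℝ, IsState u s → ∀ x : M, Φ s (γ x) = s x := by
    intro s hs x
    have := hΦeq s hs x 0
    simpa [hs.1] using this
  have hΦstate : ∀ s : M → ℝ, IsState u s →
      IsGroupState (GrothendieckCone γ) (γ u) (Φ s) := by
    intro s hs
    obtain ⟨h0, haddS, hmono, hu1⟩ := hs
    refine ⟨?_, ?_, ?_⟩
    · intro g h
      have h1 : γ (p g + p h) - γ (q g + q h) = g + h := by
        rw [map_add, map_add]
        conv_rhs => rw [hpq g, hpq h]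
        abel
      have h2 : γ (p (g + h)) - γ (q (g + h)) = γ (p g + p h) - γ (q g + q h) := by
        rw [h1]; exact (hpq (g + h)).symm
      have := hkey s ⟨h0, haddS, hmono, hu1⟩ _ _ _ _ h2
      rw [haddS, haddS] at this
      simp only [hΦ]
      linarith
    · rintro g ⟨x, y, hxy, rfl⟩
      have := hΦeq s ⟨h0, haddS, hmono, hu1⟩ y x
      rw [this]
      linarith [hmono x y hxy]
    · rw [hΦγ s ⟨h0, haddS, hmono, hu1⟩ u, hu1]
  -- s' basics
  have hGS : ∀ s' : G → ℝ, IsGroupState (GrothendieckCone γ) (γ u) s' →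
      (s' 0 = 0 ∧ ∀ a b : G, s' (a - b) = s' a - s' b) := by
    intro s' hs'
    have h0 : s' 0 = 0 := by have := hs'.1 0 0; simpa using this
    refine ⟨h0, fun a b => ?_⟩
    have := hs'.1 (a - b) b
    rw [sub_add_cancel] at this
    linarith
  have hΨstate : ∀ s' : G → ℝ, IsGroupState (GrothendieckCone γ) (γ u) s' →
      IsState u (fun x : M => s' (γ x)) := by
    intro s' hs'
    obtain ⟨h0, hsub⟩ := hGS s' hs'
    refine ⟨by simpa using h0, ?_, ?_, hs'.2.2⟩
    · intro x y
      show s' (γ (x + y)) = s' (γ x) + s' (γ y)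
      rw [map_add]; exact hs'.1 _ _
    · intro x y hxy
      have : 0 ≤ s' (γ y - γ x) := hs'.2.1 _ ⟨x, y, hxy, rfl⟩
      rw [hsub] at this
      linarith
  have hΨΦ : ∀ s : M → ℝ, IsState u s → (fun x : M => Φ s (γ x)) = s := by
    intro s hs; funext x; exact hΦγ s hs x
  have hΦΨ : ∀ s' : G → ℝ, IsGroupState (GrothendieckCone γ) (γ u) s' →
      Φ (fun x : M => s' (γ x)) = s' := by
    intro s' hs'
    obtain ⟨h0, hsub⟩ := hGS s' hs'
    funext g
    simp only [hΦ]
    rw [← hsub, ← hpq g]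
  refine ⟨?_, ?_, ?_⟩
  · intro s hs
    exact ⟨Φ s, hΦstate s hs, hΦeq s hs⟩
  · intro s' hs'
    exact hΨstate s' hs'
  · refine ⟨{ toFun := fun s => ⟨Φ s.1, hΦstate s.1 s.2⟩
              invFun := fun s' => ⟨fun x => s'.1 (γ x), hΨstate s'.1 s'.2⟩
              left_inv := fun s => Subtype.ext (hΨΦ s.1 s.2)
              right_inv := fun s' => Subtype.ext (hΦΨ s'.1 s'.2) }, ?_, ?_, ?_, ?_⟩
    · intro s x y
      exact hΦeq s.1 s.2 x y
    · intro s₁ s₂ t ht0 ht1 h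
      funext g
      simp only [Equiv.coe_fn_mk, hΦ, Pi.add_apply, Pi.smul_apply, smul_eq_mul]
      ring
    · apply Continuous.subtype_mk
      apply continuous_pi
      intro g
      exact ((continuous_apply (p g)).comp continuous_subtype_val).sub
        ((continuous_apply (q g)).comp continuous_subtype_val)
    · apply Continuous.subtype_mk
      apply continuous_pi
      intro x
      exact (continuous_apply (γ x)).comp continuous_subtype_val
end

section
/- Let (M, ≤, u) be a scaled partially ordered abelian semigroup and let x, y ∈ M. Then s(x) < s(y) for every state s ∈ S(M, ≤, u) if and only if there exist a positive integer n and an element z ∈ M such that n • x + z + u ≤ n • y + z. -/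
open Set LinearMap

namespace RieszQ

open Submodule

variable {E : Type*} [AddCommGroup E] [Module ℚ E]
variable (s : ConvexCone ℚ E) (f : E →ₗ.[ℚ] ℝ)

theorem step (nonneg : ∀ x : f.domain, (x : E) ∈ s → 0 ≤ f x)
    (dense : ∀ y, ∃ x : f.domain, (x : E) + y ∈ s) (hdom : f.domain ≠ ⊤) :
    ∃ g, f < g ∧ ∀ x : g.domain, (x : E) ∈ s → 0 ≤ g x := by
  obtain ⟨y, -, hy⟩ : ∃ y ∈ ⊤, y ∉ f.domain := SetLike.exists_of_lt (lt_top_iff_ne_top.2 hdom)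
  obtain ⟨c, le_c, c_le⟩ :
      ∃ c : ℝ, (∀ x : f.domain, -(x : E) - y ∈ s → f x ≤ c) ∧
        ∀ x : f.domain, (x : E) + y ∈ s → c ≤ f x := by
    set Sp := f '' { x : f.domain | (x : E) + y ∈ s }
    set Sn := f '' { x : f.domain | -(x : E) - y ∈ s }
    suffices (upperBounds Sn ∩ lowerBounds Sp).Nonempty by
      simpa only [Sn, Sp, Set.Nonempty, upperBounds, lowerBounds, mem_inter_iff, mem_setOf_eq, forall_mem_image] using this
    refine exists_between_of_forall_le (Nonempty.image f ?_) (Nonempty.image f (dense y)) ?_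
    · rcases dense (-y) with ⟨x, hx⟩
      rw [← neg_neg x, NegMemClass.coe_neg, ← sub_eq_add_neg] at hx
      exact ⟨_, hx⟩
    rintro a ⟨xn, hxn, rfl⟩ b ⟨xp, hxp, rfl⟩
    have := s.add_mem hxp hxn
    rw [add_assoc, add_sub_cancel, ← sub_eq_add_neg, ← AddSubgroupClass.coe_sub] at this
    replace := nonneg _ this
    rwa [f.map_sub, sub_nonneg] at this
  refine ⟨f.supSpanSingleton y (-c) hy, ?_, ?_⟩
  · refine lt_iff_le_not_ge.2 ⟨f.left_le_sup _ _, fun H => ?_⟩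
    replace H := LinearPMap.domain_mono.monotone H
    rw [LinearPMap.domain_supSpanSingleton, sup_le_iff, span_le, singleton_subset_iff] at H
    exact hy H.2
  · rintro ⟨z, hz⟩ hzs
    rcases mem_sup.1 hz with ⟨x, hx, y', hy', rfl⟩
    rcases mem_span_singleton.1 hy' with ⟨r, rfl⟩
    simp only [Subtype.coe_mk] at hzs
    rw [LinearPMap.supSpanSingleton_apply_mk _ _ _ _ _ hx, smul_neg, ← sub_eq_add_neg, sub_nonneg]
    rw [Rat.smul_def]
    rcases lt_trichotomy r 0 with (hr | hr | hr)
    · have hrR : (r : ℝ) < 0 := by exact_mod_cast hr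
      have hmem : -(r⁻¹ • x) - y ∈ s := by
        rwa [← s.smul_mem_iff (neg_pos.2 hr), smul_sub, smul_neg, neg_smul, neg_neg, smul_smul,
          mul_inv_cancel₀ hr.ne, one_smul, sub_eq_add_neg, neg_smul, neg_neg]
      have h0 : f (r⁻¹ • ⟨x, hx⟩) ≤ c := le_c (r⁻¹ • ⟨x, hx⟩) (by exact hmem)
      rw [f.map_smul, Rat.smul_def, Rat.cast_inv] at h0
      have h3 : (r:ℝ) * c ≤ (r:ℝ) * ((r:ℝ)⁻¹ * f ⟨x, hx⟩) :=
        mul_le_mul_of_nonpos_left h0 hrR.le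
      rwa [← mul_assoc, mul_inv_cancel₀ hrR.ne, one_mul] at h3
    · subst r
      simp only [RingHom.id_apply, Rat.cast_zero, zero_mul, zero_smul, add_zero] at hzs ⊢
      apply nonneg
      exact hzs
    · have hrR : (0:ℝ) < (r : ℝ) := by exact_mod_cast hr
      have hmem : r⁻¹ • x + y ∈ s := by
        rwa [← s.smul_mem_iff hr, smul_add, smul_smul, mul_inv_cancel₀ hr.ne', one_smul]
      have h0 : c ≤ f (r⁻¹ • ⟨x, hx⟩) := c_le (r⁻¹ • ⟨x, hx⟩) (by exact hmem)
      rw [f.map_smul, Rat.smul_def, Rat.cast_inv] at h0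
      have h3 : (r:ℝ) * c ≤ (r:ℝ) * ((r:ℝ)⁻¹ * f ⟨x, hx⟩) :=
        mul_le_mul_of_nonneg_left h0 hrR.le
      rwa [← mul_assoc, mul_inv_cancel₀ hrR.ne', one_mul] at h3
    
theorem exists_top (p : E →ₗ.[ℚ] ℝ) (hp_nonneg : ∀ x : p.domain, (x : E) ∈ s → 0 ≤ p x)
    (hp_dense : ∀ y, ∃ x : p.domain, (x : E) + y ∈ s) :
    ∃ q ≥ p, q.domain = ⊤ ∧ ∀ x : q.domain, (x : E) ∈ s → 0 ≤ q x := by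
  set S := { p : E →ₗ.[ℚ] ℝ | ∀ x : p.domain, (x : E) ∈ s → 0 ≤ p x }
  have hSc : ∀ c, c ⊆ S → IsChain (· ≤ ·) c → ∀ y ∈ c, ∃ ub ∈ S, ∀ z ∈ c, z ≤ ub := by
    intro c hcs c_chain y hy
    clear hp_nonneg hp_dense p
    have cne : c.Nonempty := ⟨y, hy⟩
    have hcd : DirectedOn (· ≤ ·) c := c_chain.directedOn
    refine ⟨LinearPMap.sSup c hcd, ?_, fun _ ↦ LinearPMap.le_sSup hcd⟩
    rintro ⟨x, hx⟩ hxs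
    have hdir : DirectedOn (· ≤ ·) (LinearPMap.domain '' c) :=
      directedOn_image.2 (hcd.mono LinearPMap.domain_mono.monotone)
    rcases (mem_sSup_of_directed (cne.image _) hdir).1 hx with ⟨_, ⟨f, hfc, rfl⟩, hfx⟩
    have : f ≤ LinearPMap.sSup c hcd := LinearPMap.le_sSup _ hfc
    convert ← hcs hfc ⟨x, hfx⟩ hxs using 1
    exact this.2 rfl
  obtain ⟨q, hpq, hqs, hq⟩ := zorn_le_nonempty₀ S hSc p hp_nonneg
  refine ⟨q, hpq, ?_, hqs⟩
  contrapose! hq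
  have hqd : ∀ y, ∃ x : q.domain, (x : E) + y ∈ s := fun y ↦
    let ⟨x, hx⟩ := hp_dense y
    ⟨Submodule.inclusion hpq.left x, hx⟩
  rcases step s q hqs hqd hq with ⟨r, hqr, hr⟩
  exact ⟨r, hr, hqr.le, fun hrq ↦ hqr.ne' <| hrq.antisymm hqr.le⟩

theorem riesz_extension_q (nonneg : ∀ x : f.domain, (x : E) ∈ s → 0 ≤ f x)
    (dense : ∀ y, ∃ x : f.domain, (x : E) + y ∈ s) :
    ∃ g : E →ₗ[ℚ] ℝ, (∀ x : f.domain, g x = f x) ∧ ∀ x ∈ s, 0 ≤ g x := by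
  rcases exists_top s f nonneg dense
    with ⟨⟨g_dom, g⟩, ⟨-, hfg⟩, rfl : g_dom = ⊤, hgs⟩
  refine ⟨g.comp (LinearMap.id.codRestrict ⊤ fun _ ↦ trivial), ?_, ?_⟩
  · exact fun x => (hfg rfl).symm
  · exact fun x hx => hgs ⟨x, _⟩ hx

end RieszQ

namespace StateProof
set_option linter.unusedSectionVars false

noncomputable section
open Classical Finsupp

variable {M : Type*} [AddCommMonoid M] [PartialOrder M]

def δ (a : M) : M →₀ ℚ := Finsupp.single a 1

def Gen (M : Type*) := (M × M) ⊕ ((M × M) ⊕ ((M × M) ⊕ Unit))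

variable (x y : M)

def vec : Gen M → (M →₀ ℚ)
  | Sum.inl (a,b) => if a ≤ b then δ b - δ a else 0
  | Sum.inr (Sum.inl (a,b)) => δ (a+b) - δ a - δ b
  | Sum.inr (Sum.inr (Sum.inl (a,b))) => δ a + δ b - δ (a+b)
  | Sum.inr (Sum.inr (Sum.inr _)) => δ x - δ y

def Pv : Gen M → (M →₀ ℕ)
  | Sum.inl (a,b) => if a ≤ b then Finsupp.single b 1 else 0
  | Sum.inr (Sum.inl (a,b)) => Finsupp.single (a+b) 1
  | Sum.inr (Sum.inr (Sum.inl (a,b))) => Finsupp.single a 1 + Finsupp.single b 1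
  | Sum.inr (Sum.inr (Sum.inr _)) => Finsupp.single x 1

def Nv : Gen M → (M →₀ ℕ)
  | Sum.inl (a,b) => if a ≤ b then Finsupp.single a 1 else 0
  | Sum.inr (Sum.inl (a,b)) => Finsupp.single a 1 + Finsupp.single b 1
  | Sum.inr (Sum.inr (Sum.inl (a,b))) => Finsupp.single (a+b) 1
  | Sum.inr (Sum.inr (Sum.inr _)) => Finsupp.single y 1

def toQ : (M →₀ ℕ) →+ (M →₀ ℚ) := Finsupp.mapRange.addMonoidHom (Nat.castAddMonoidHom ℚ)

lemma toQ_injective : Function.Injective (toQ (M := M)) :=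
  Finsupp.mapRange_injective _ (by simp) Nat.cast_injective

lemma toQ_single (a : M) (k : ℕ) : toQ (Finsupp.single a k) = Finsupp.single a (k : ℚ) :=
  Finsupp.mapRange_single (hf := by simp)

lemma vec_eq (g : Gen M) : vec x y g = toQ (Pv x g) - toQ (Nv y g) := by
  rcases g with ⟨a,b⟩ | ⟨a,b⟩ | ⟨a,b⟩ | _
  · by_cases h : a ≤ b <;> simp [vec, Pv, Nv, toQ_single, δ, h]
  · simp [vec, Pv, Nv, toQ_single, δ, map_add]; abel
  · simp [vec, Pv, Nv, toQ_single, δ, map_add]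
  · simp [vec, Pv, Nv, toQ_single, δ]

def σh : (M →₀ ℕ) →+ M := Finsupp.liftAddHom (fun a => multiplesHom M a)

lemma σ_single (a : M) (k : ℕ) : σh (Finsupp.single a k) = k • a :=
  Finsupp.liftAddHom_apply_single _ _ _

def pp : Gen M → M
  | Sum.inl (a,b) => if a ≤ b then b else 0
  | Sum.inr (Sum.inl (a,b)) => a + b
  | Sum.inr (Sum.inr (Sum.inl (a,b))) => a + b
  | Sum.inr (Sum.inr (Sum.inr _)) => 0

def np : Gen M → M
  | Sum.inl (a,b) => if a ≤ b then a else 0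
  | Sum.inr (Sum.inl (a,b)) => a + b
  | Sum.inr (Sum.inr (Sum.inl (a,b))) => a + b
  | Sum.inr (Sum.inr (Sum.inr _)) => 0

def kp : Gen M → ℕ
  | Sum.inr (Sum.inr (Sum.inr _)) => 1
  | _ => 0

lemma σP (g : Gen M) : σh (Pv x g) = pp g + kp g • x := by
  rcases g with ⟨a,b⟩ | ⟨a,b⟩ | ⟨a,b⟩ | _ <;>
    simp [Pv, pp, kp, σ_single, map_add, one_smul]
  split <;> simp [σ_single]

lemma σN (g : Gen M) : σh (Nv y g) = np g + kp g • y := by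
  rcases g with ⟨a,b⟩ | ⟨a,b⟩ | ⟨a,b⟩ | _ <;>
    simp [Nv, np, kp, σ_single, map_add, one_smul]
  split <;> simp [σ_single]

lemma np_le_pp (g : Gen M) : np g ≤ pp g := by
  rcases g with ⟨a,b⟩ | ⟨a,b⟩ | ⟨a,b⟩ | _ <;> simp [np, pp]
  split_ifs with h
  · exact h
  · exact le_refl _


def CC : ConvexCone ℚ (M →₀ ℚ) where
  carrier := { v | ∃ c : Gen M →₀ ℚ, (∀ g, 0 ≤ c g) ∧ v = c.sum fun g t => t • vec x y g }
  smul_mem' := by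
    rintro t ht v ⟨c, hc, rfl⟩
    refine ⟨t • c, fun g => ?_, ?_⟩
    · exact smul_nonneg ht.le (hc g)
    · rw [Finsupp.sum_smul_index' (fun g => by simp), Finsupp.smul_sum]
      simp [smul_smul]
  add_mem' := by
    rintro v ⟨c, hc, rfl⟩ w ⟨c', hc', rfl⟩
    refine ⟨c + c', fun g => add_nonneg (hc g) (hc' g), ?_⟩
    rw [Finsupp.sum_add_index' (fun g => by simp) (fun g t t' => add_smul t t' _)]

lemma zero_mem_CC : (0 : M →₀ ℚ) ∈ CC x y := ⟨0, fun g => le_refl _, by simp⟩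

lemma vec_mem_CC (g : Gen M) : vec x y g ∈ CC x y :=
  ⟨Finsupp.single g 1, fun g' => by
      classical
      rw [Finsupp.single_apply]
      split <;> norm_num ,
    by rw [Finsupp.sum_single_index (by simp), one_smul]⟩

lemma smul_mem_CC {v : M →₀ ℚ} {t : ℚ} (ht : 0 ≤ t) (hv : v ∈ CC x y) : t • v ∈ CC x y := by
  rcases ht.lt_or_eq with h | h
  · exact (CC x y).smul_mem h hv
  · rw [← h, zero_smul]; exact zero_mem_CC x y


lemma delta_zero_mem : δ (0 : M) ∈ CC x y := by
  have h := vec_mem_CC x y (Sum.inr (Sum.inr (Sum.inl ((0 : M), (0 : M)))))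
  simpa [vec] using h

lemma neg_delta_zero_mem : -δ (0 : M) ∈ CC x y := by
  have h := vec_mem_CC x y (Sum.inr (Sum.inl ((0 : M), (0 : M))))
  simpa [vec, sub_sub] using h

lemma le_mem_CC {a b : M} (h : a ≤ b) : δ b - δ a ∈ CC x y := by
  have hv := vec_mem_CC x y (Sum.inl (a, b))
  simpa [vec, if_pos h] using hv

lemma add_rel_mem_CC (a b : M) : δ (a + b) - δ a - δ b ∈ CC x y :=
  vec_mem_CC x y (Sum.inr (Sum.inl (a, b)))

lemma add_rel_mem_CC' (a b : M) : δ a + δ b - δ (a + b) ∈ CC x y :=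
  vec_mem_CC x y (Sum.inr (Sum.inr (Sum.inl (a, b))))

lemma xy_mem_CC : δ x - δ y ∈ CC x y :=
  vec_mem_CC x y (Sum.inr (Sum.inr (Sum.inr ())))

lemma delta_mem_CC (hpos : ∀ a : M, 0 ≤ a) (a : M) : δ a ∈ CC x y := by
  have h1 := le_mem_CC x y (hpos a)
  have h2 := delta_zero_mem x y
  have := (CC x y).add_mem h1 h2
  simpa using this

lemma nsmul_u_mem_CC (u : M) : ∀ N : ℕ, (N : ℚ) • δ u - δ (N • u) ∈ CC x y := by
  intro N
  induction N with
  | zero => simpa using neg_delta_zero_mem x y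
  | succ n ih =>
    have h2 := add_rel_mem_CC' x y (n • u) u
    have := (CC x y).add_mem ih h2
    have heq : (n : ℚ) • δ u - δ (n • u) + (δ (n • u) + δ u - δ (n • u + u)) =
        ((n + 1 : ℕ) : ℚ) • δ u - δ ((n + 1) • u) := by
      rw [succ_nsmul]
      push_cast
      module
    rwa [heq] at this

lemma dense_CC (hpos : ∀ a : M, 0 ≤ a) (u : M) (hu : ∀ a : M, ∃ n : ℕ, a ≤ n • u) :
    ∀ v : M →₀ ℚ, ∃ t : ℚ, t • δ u + v ∈ CC x y := by
  intro v
  induction v using Finsupp.induction with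
  | zero => exact ⟨0, by simpa using zero_mem_CC x y⟩
  | single_add a r w _ _ ih =>
    obtain ⟨t, ht⟩ := ih
    have hsingle : ∃ t' : ℚ, t' • δ u + Finsupp.single a r ∈ CC x y := by
      rcases le_or_gt 0 r with hr | hr
      · refine ⟨0, ?_⟩
        have := smul_mem_CC x y hr (delta_mem_CC x y hpos a)
        simpa [δ, Finsupp.smul_single] using this
      · obtain ⟨N, hN⟩ := hu a
        have h1 := le_mem_CC x y hN
        have h2 := nsmul_u_mem_CC x y u N
        have h3 := (CC x y).add_mem h1 h2
        have h4 := smul_mem_CC x y (neg_nonneg.2 hr.le) h3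
        refine ⟨-r * N, ?_⟩
        have heq : (-r) • (δ (N • u) - δ a + ((N : ℚ) • δ u - δ (N • u))) =
            (-r * N) • δ u + Finsupp.single a r := by
          have : Finsupp.single a r = r • δ a := by simp [δ, Finsupp.smul_single]
          rw [this]
          module
        rwa [heq] at h4
    obtain ⟨t', ht'⟩ := hsingle
    refine ⟨t' + t, ?_⟩
    have := (CC x y).add_mem ht' ht
    have heq : t' • δ u + Finsupp.single a r + (t • δ u + w) =
        (t' + t) • δ u + (Finsupp.single a r + w) := by module
    rwa [heq] at this


section Ordered
variable (hadd : ∀ a b c : M, a ≤ b → a + c ≤ b + c)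
include hadd

lemma hadd_left {a b : M} (c : M) (h : a ≤ b) : c + a ≤ c + b := by
  rw [add_comm c a, add_comm c b]; exact hadd a b c h

lemma nsmul_le_nsmul_right {a b : M} (h : a ≤ b) (n : ℕ) : n • a ≤ n • b := by
  induction n with
  | zero => simp
  | succ k ih =>
    rw [succ_nsmul, succ_nsmul]
    exact le_trans (hadd _ _ a ih) (hadd_left hadd _ h)

lemma sum_le_sum' {ι : Type*} (s : Finset ι) (f g : ι → M) (h : ∀ i ∈ s, f i ≤ g i) :
    (∑ i ∈ s, f i) ≤ ∑ i ∈ s, g i := by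
  classical
  induction s using Finset.induction_on with
  | empty => simp
  | @insert a s' hx ih =>
    rw [Finset.sum_insert hx, Finset.sum_insert hx]
    exact le_trans (hadd _ _ _ (h a (Finset.mem_insert_self a s')))
      (hadd_left hadd _ (ih (fun i hi => h i (Finset.mem_insert_of_mem hi))))

lemma extract (hpos : ∀ a : M, 0 ≤ a) (u : M) (hu : ∀ a : M, ∃ n : ℕ, a ≤ n • u)
    {A B : M} {K L : ℕ} (hL : 0 < L) (hAB : A ≤ B)
    (heq : B + K • x + L • u = A + K • y) :
    ∃ n : ℕ, 0 < n ∧ ∃ z : M, n • x + z + u ≤ n • y + z := by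
  have hu_le : u ≤ L • u := by
    obtain ⟨L', rfl⟩ := Nat.exists_eq_succ_of_ne_zero hL.ne'
    rw [succ_nsmul]
    calc u = 0 + u := (zero_add u).symm
    _ ≤ L' • u + u := hadd _ _ u (hpos _)
  have hmain : K • x + A + u ≤ K • y + A := by
    calc K • x + A + u ≤ K • x + B + u := hadd _ _ _ (hadd_left hadd _ hAB)
    _ ≤ K • x + B + L • u := hadd_left hadd _ hu_le
    _ = B + K • x + L • u := by rw [add_comm (K • x) B]
    _ = A + K • y := heq
    _ = K • y + A := add_comm _ _
  rcases Nat.eq_zero_or_pos K with hK | hK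
  · subst hK
    simp only [zero_smul, zero_add] at hmain
    -- hmain : A + u ≤ A
    have habs : ∀ N : ℕ, A + N • u ≤ A := by
      intro N
      induction N with
      | zero => simp
      | succ k ih =>
        calc A + (k+1) • u = A + k • u + u := by rw [succ_nsmul, add_assoc]
        _ ≤ A + u := hadd _ _ _ ih
        _ ≤ A := hmain
    obtain ⟨N, hN⟩ := hu x
    refine ⟨1, Nat.one_pos, A, ?_⟩
    calc 1 • x + A + u ≤ N • u + A + u := hadd _ _ _ (hadd _ _ _ (by simpa using hN))
    _ = A + (N • u + u) := by rw [add_comm (N • u) A, add_assoc]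
    _ = A + (N + 1) • u := by rw [succ_nsmul]
    _ ≤ A := habs (N + 1)
    _ ≤ A + 1 • y := by
        calc A = A + 0 := (add_zero A).symm
        _ ≤ A + 1 • y := hadd_left hadd A (hpos _)
    _ = 1 • y + A := add_comm _ _
  · exact ⟨K, hK, A, by
      calc K • x + A + u ≤ K • y + A := hmain
      _ = K • y + A := rfl⟩

end Ordered


lemma exists_nat_mul (r : ℚ) (hr : 0 ≤ r) (d : ℕ) (hd : r.den ∣ d) :
    ∃ k : ℕ, (k : ℚ) = d * r := by
  obtain ⟨c, hc⟩ := hd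
  refine ⟨c * r.num.toNat, ?_⟩
  have hden : ((r.den : ℚ)) * r = (r.num : ℚ) := by
    rw [mul_comm]; exact_mod_cast Rat.mul_den_eq_num r
  have htn : ((r.num.toNat : ℕ) : ℚ) = (r.num : ℚ) := by
    exact_mod_cast congrArg (Int.cast : ℤ → ℚ) (Int.toNat_of_nonneg (Rat.num_nonneg.2 hr))
  have h1 : ((c * r.num.toNat : ℕ) : ℚ) = (c : ℚ) * (r.num : ℚ) := by
    push_cast [htn]; ring
  rw [h1, hc]
  push_cast
  rw [mul_comm (r.den : ℚ) (c : ℚ), mul_assoc, hden]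

section Key
variable (hpos : ∀ a : M, 0 ≤ a) (hadd : ∀ a b c : M, a ≤ b → a + c ≤ b + c)
  (u : M) (hu : ∀ a : M, ∃ n : ℕ, a ≤ n • u)

include hpos hadd hu

lemma key (hcon : ¬ ∃ n : ℕ, 0 < n ∧ ∃ z : M, n • x + z + u ≤ n • y + z) :
    ∀ q : ℚ, q • δ u ∈ CC x y → 0 ≤ q := by
  intro q hq
  by_contra hq0
  rw [not_le] at hq0
  obtain ⟨c, hc, hsum⟩ := hq
  classical
  set s := c.support with hs
  set d : ℕ := q.den * ∏ g ∈ s, (c g).den with hd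
  have hd0 : 0 < d := Nat.mul_pos q.den_pos (Finset.prod_pos fun g _ => (c g).den_pos)
  have hm : ∀ g ∈ s, ∃ k : ℕ, (k : ℚ) = (d : ℚ) * c g := by
    intro g hg
    refine exists_nat_mul (c g) (hc g) d ?_
    rw [hd]
    exact Dvd.dvd.mul_left (Finset.dvd_prod_of_mem _ hg) _
  choose mm hmk using hm
  set m' : Gen M → ℕ := fun g => if hg : g ∈ s then mm g hg else 0 with hm'
  obtain ⟨L, hLeq⟩ : ∃ k : ℕ, (k : ℚ) = (d : ℚ) * (-q) := by
    refine exists_nat_mul (-q) (by linarith) d ?_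
    rw [Rat.neg_den, hd]
    exact Dvd.dvd.mul_right dvd_rfl _
  have hL0 : 0 < L := by
    have hQ : (0 : ℚ) < (L : ℚ) := by
      rw [hLeq]
      have : (0:ℚ) < (d:ℚ) := by exact_mod_cast hd0
      nlinarith
    exact_mod_cast hQ
  -- multiply the combination by d and express with natural coefficients
  have hsum' : ∑ g ∈ s, (m' g : ℚ) • vec x y g = -((L : ℚ) • δ u) := by
    have h1 : ∑ g ∈ s, (c g) • vec x y g = q • δ u := hsum.symm ▸ rfl
    have h2 : ∑ g ∈ s, ((d : ℚ) * c g) • vec x y g = ((d : ℚ) * q) • δ u := by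
      calc ∑ g ∈ s, ((d : ℚ) * c g) • vec x y g
          = (d : ℚ) • ∑ g ∈ s, (c g) • vec x y g := by
            rw [Finset.smul_sum]
            exact Finset.sum_congr rfl fun g _ => (smul_smul _ _ _).symm
        _ = ((d : ℚ) * q) • δ u := by rw [h1, smul_smul]
    calc ∑ g ∈ s, (m' g : ℚ) • vec x y g
        = ∑ g ∈ s, ((d : ℚ) * c g) • vec x y g := by
          refine Finset.sum_congr rfl fun g hg => ?_
          rw [hm']
          simp only [dif_pos hg]
          rw [hmk g hg]
      _ = ((d : ℚ) * q) • δ u := h2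
      _ = -((L : ℚ) • δ u) := by
          rw [hLeq]
          module
  -- pass to natural-number finsupps
  set PP : M →₀ ℕ := (∑ g ∈ s, m' g • Pv x g) + L • Finsupp.single u 1 with hPP
  set NN : M →₀ ℕ := ∑ g ∈ s, m' g • Nv y g with hNN
  have htoQ : toQ PP = toQ NN := by
    have hδ : δ u = toQ (Finsupp.single u 1) := by rw [toQ_single]; norm_num [δ]
    have expand : ∀ (P : Gen M → (M →₀ ℕ)), toQ (∑ g ∈ s, m' g • P g)
        = ∑ g ∈ s, (m' g : ℚ) • toQ (P g) := by
      intro P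
      rw [map_sum]
      exact Finset.sum_congr rfl fun g _ => by
        rw [map_nsmul, Nat.cast_smul_eq_nsmul]
    have hdiff : toQ PP - toQ NN = 0 := by
      rw [hPP, hNN, map_add, expand, expand, map_nsmul, ← Nat.cast_smul_eq_nsmul ℚ L, ← hδ]
      have : ∑ g ∈ s, (m' g : ℚ) • toQ (Pv x g) - ∑ g ∈ s, (m' g : ℚ) • toQ (Nv y g)
          = ∑ g ∈ s, (m' g : ℚ) • (toQ (Pv x g) - toQ (Nv y g)) := by
        rw [← Finset.sum_sub_distrib]
        exact Finset.sum_congr rfl fun g _ => (smul_sub _ _ _).symm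
      have h3 : ∑ g ∈ s, (m' g : ℚ) • (toQ (Pv x g) - toQ (Nv y g)) = -((L : ℚ) • δ u) := by
        rw [← hsum']
        exact Finset.sum_congr rfl fun g _ => by rw [vec_eq]
      -- goal: (∑ ... • toQ Pv) + L • δ u - ∑ ... • toQ Nv = 0
      have h4 : ∑ g ∈ s, (m' g : ℚ) • toQ (Pv x g) - ∑ g ∈ s, (m' g : ℚ) • toQ (Nv y g)
          = -((L : ℚ) • δ u) := by rw [this, h3]
      linear_combination (norm := module) h4
    exact sub_eq_zero.1 hdiff
  have hMN : PP = NN := toQ_injective htoQ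
  -- apply σh
  have hσ : σh PP = σh NN := by rw [hMN]
  set K : ℕ := ∑ g ∈ s, m' g * kp g with hK
  set B : M := ∑ g ∈ s, m' g • pp g with hB
  set A : M := ∑ g ∈ s, m' g • np g with hA
  have hσP : σh PP = B + K • x + L • u := by
    rw [hPP, map_add, map_sum, map_nsmul, σ_single, one_smul]
    have : ∑ g ∈ s, σh (m' g • Pv x g) = B + K • x := by
      calc ∑ g ∈ s, σh (m' g • Pv x g) = ∑ g ∈ s, (m' g • pp g + (m' g * kp g) • x) := by
            refine Finset.sum_congr rfl fun g _ => ?_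
            rw [map_nsmul, σP, smul_add, smul_smul]
        _ = B + K • x := by rw [Finset.sum_add_distrib, ← Finset.sum_smul]
    rw [this]
  have hσN : σh NN = A + K • y := by
    rw [hNN, map_sum]
    calc ∑ g ∈ s, σh (m' g • Nv y g) = ∑ g ∈ s, (m' g • np g + (m' g * kp g) • y) := by
          refine Finset.sum_congr rfl fun g _ => ?_
          rw [map_nsmul, σN, smul_add, smul_smul]
      _ = A + K • y := by rw [Finset.sum_add_distrib, ← Finset.sum_smul]
  have hAB : A ≤ B :=
    sum_le_sum' hadd s _ _ fun g _ => nsmul_le_nsmul_right hadd (np_le_pp g) (m' g)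
  have heq : B + K • x + L • u = A + K • y := by rw [← hσP, hσ, hσN]
  exact hcon (extract x y hadd hpos u hu hL0 hAB heq)

end Key


section Final
variable (hpos : ∀ a : M, 0 ≤ a) (hadd : ∀ a b c : M, a ≤ b → a + c ≤ b + c)
  (u : M) (hu : ∀ a : M, ∃ n : ℕ, a ≤ n • u)
include hpos hadd hu

lemma exists_state (hcon : ¬ ∃ n : ℕ, 0 < n ∧ ∃ z : M, n • x + z + u ≤ n • y + z) :
    ∃ st : M → ℝ, (st 0 = 0 ∧ (∀ a b : M, st (a + b) = st a + st b) ∧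
      (∀ a b : M, a ≤ b → st a ≤ st b) ∧ st u = 1) ∧ st y ≤ st x := by
  classical
  have hne : δ u ≠ 0 := by
    simp only [δ]
    intro h
    exact one_ne_zero (Finsupp.single_eq_zero.1 h)
  set f : (M →₀ ℚ) →ₗ.[ℚ] ℝ := LinearPMap.mkSpanSingleton (δ u) (1 : ℝ) hne with hf
  have hdom : f.domain = Submodule.span ℚ {δ u} := rfl
  have hnonneg : ∀ v : f.domain, (v : M →₀ ℚ) ∈ CC x y → 0 ≤ f v := by
    rintro ⟨v, hv⟩ hvC
    rw [hdom, Submodule.mem_span_singleton] at hv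
    obtain ⟨t, ht⟩ := hv
    have ht0 : 0 ≤ t := by
      refine key x y hpos hadd u hu hcon t ?_
      rwa [ht]
    have hmem : t • δ u ∈ f.domain := by
      rw [hdom]
      exact Submodule.smul_mem _ t (Submodule.mem_span_singleton_self _)
    have : (⟨v, ‹(v : M →₀ ℚ) ∈ f.domain›⟩ : f.domain) = ⟨t • δ u, hmem⟩ := by
      exact Subtype.ext ht.symm
    rw [this]
    have happ : f ⟨t • δ u, hmem⟩ = t • (1 : ℝ) :=
      LinearPMap.mkSpanSingleton'_apply _ _ _ t _
    rw [happ, Rat.smul_def, mul_one]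
    exact_mod_cast ht0
  have hdense : ∀ v : M →₀ ℚ, ∃ w : f.domain, (w : M →₀ ℚ) + v ∈ CC x y := by
    intro v
    obtain ⟨t, ht⟩ := dense_CC x y hpos u hu v
    exact ⟨⟨t • δ u, by
      rw [hdom]; exact Submodule.smul_mem _ t (Submodule.mem_span_singleton_self _)⟩, ht⟩
  obtain ⟨g, hg_eq, hg_nonneg⟩ := RieszQ.riesz_extension_q (CC x y) f hnonneg hdense
  have hgu : g (δ u) = 1 := by
    have := hg_eq ⟨δ u, by rw [hdom]; exact Submodule.mem_span_singleton_self _⟩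
    rw [this, LinearPMap.mkSpanSingleton_apply]
  refine ⟨fun a => g (δ a), ⟨?_, ?_, ?_, hgu⟩, ?_⟩
  · have h1 := hg_nonneg _ (delta_zero_mem x y)
    have h2 := hg_nonneg _ (neg_delta_zero_mem x y)
    rw [map_neg] at h2
    linarith
  · intro a b
    have h1 := hg_nonneg _ (add_rel_mem_CC x y a b)
    have h2 := hg_nonneg _ (add_rel_mem_CC' x y a b)
    rw [map_sub, map_sub] at h1
    rw [map_sub, map_add] at h2
    linarith
  · intro a b hab
    have h1 := hg_nonneg _ (le_mem_CC x y hab)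
    rw [map_sub] at h1
    linarith
  · have h1 := hg_nonneg _ (xy_mem_CC x y)
    rw [map_sub] at h1
    linarith

end Final

end
end StateProof

/-- Let `(M, ≤, u)` be a scaled partially ordered abelian semigroup and `x y : M`.
Then `s x < s y` for every state `s ∈ S(M, ≤, u)` iff there exist a positive integer
`n` and `z : M` with `n • x + z + u ≤ n • y + z`. -/
theorem state_lt_iff_exists {M : Type*} [AddCommMonoid M] [PartialOrder M]
    (hpos : ∀ a : M, 0 ≤ a)
    (hadd : ∀ a b c : M, a ≤ b → a + c ≤ b + c)
    (u : M) (hu : ∀ x : M, ∃ n : ℕ, x ≤ n • u)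
    (x y : M) :
    (∀ s ∈ StateSpace M u, s x < s y) ↔
      ∃ n : ℕ, 0 < n ∧ ∃ z : M, n • x + z + u ≤ n • y + z := by
  constructor
  · intro hlt
    by_contra hcon
    obtain ⟨st, hstate, hyx⟩ := StateProof.exists_state x y hpos hadd u hu hcon
    have hmem : st ∈ StateSpace M u := hstate
    have := hlt st hmem
    linarith
  · rintro ⟨n, hn, z, hle⟩ s hs
    obtain ⟨h0, hadds, hmono, hsu⟩ := hs
    have hsmul : ∀ (k : ℕ) (a : M), s (k • a) = k * s a := by
      intro k a
      induction k with
      | zero => simpa using h0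
      | succ m ih =>
        rw [succ_nsmul, hadds, ih]
        push_cast
        ring
    have h1 := hmono _ _ hle
    rw [hadds, hadds, hadds, hsmul, hsmul, hsu] at h1
    have hn' : (0 : ℝ) < n := by exact_mod_cast hn
    by_contra hc
    rw [not_lt] at hc
    have h2 : (n : ℝ) * s y ≤ (n : ℝ) * s x := mul_le_mul_of_nonneg_left hc hn'.le
    linarith
end

section
/- Let (M, ≤, u) be a scaled partially ordered abelian semigroup and let K be a nonempty compact convex subset of the state space S(M, ≤, u) (with the topology of pointwise convergence). Suppose that for all a, b ∈ M, if s(a) < s(b) for every s ∈ K, then s(a) < s(b) for every s ∈ S(M, ≤, u). Then K = S(M, ≤, u). -/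
open Finset Topology in
theorem pi_clm_repr {ι : Type*} [DecidableEq ι] (f : (ι → ℝ) →L[ℝ] ℝ) :
    ∃ F : Finset ι, ∀ x : ι → ℝ, f x = ∑ i ∈ F, f (Pi.single i 1) * x i := by
  have h0 : f ⁻¹' Metric.ball 0 1 ∈ 𝓝 (0 : ι → ℝ) := by
    have hc := f.continuous.continuousAt (x := (0 : ι → ℝ))
    have : Metric.ball (0:ℝ) 1 ∈ 𝓝 (f 0) := by
      rw [map_zero]; exact Metric.ball_mem_nhds _ one_pos
    exact hc.preimage_mem_nhds this
  rw [nhds_pi, Filter.mem_pi] at h0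
  obtain ⟨I, hIfin, ts, hts, hsub⟩ := h0
  have hker : ∀ y : ι → ℝ, (∀ i ∈ I, y i = 0) → f y = 0 := by
    intro y hy
    by_contra hfy
    have hmem : (2 / f y) • y ∈ I.pi ts := by
      rw [Set.mem_pi]
      intro i hi
      have : ((2 / f y) • y) i = 0 := by simp [hy i hi]
      rw [this]
      exact mem_of_mem_nhds (hts i)
    have h2 : f ((2 / f y) • y) = 2 := by
      rw [map_smul, smul_eq_mul]; field_simp
    have := hsub hmem
    rw [Set.mem_preimage, Metric.mem_ball, h2] at this
    norm_num [Real.dist_eq] at this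
  refine ⟨hIfin.toFinset, fun x => ?_⟩
  have hy : f (x - ∑ i ∈ hIfin.toFinset, x i • (Pi.single i 1 : ι → ℝ)) = 0 := by
    apply hker
    intro i hi
    simp only [Pi.sub_apply, Finset.sum_apply, Pi.smul_apply, smul_eq_mul]
    rw [Finset.sum_eq_single i]
    · simp
    · intro j _ hj; simp [Pi.single_apply, hj]
    · intro h; exact absurd (hIfin.mem_toFinset.2 hi) h
  have hsub' := map_sub f x (∑ i ∈ hIfin.toFinset, x i • (Pi.single i 1 : ι → ℝ))
  rw [hy] at hsub'
  have hx : f x = f (∑ i ∈ hIfin.toFinset, x i • (Pi.single i 1 : ι → ℝ)) := by linarith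
  rw [hx, map_sum]
  exact Finset.sum_congr rfl fun i _ => by rw [map_smul, smul_eq_mul, mul_comm]

/-- Let `(M, ≤, u)` be a scaled partially ordered abelian semigroup and `K` a nonempty
compact convex subset of `S(M, ≤, u)`. Suppose that for all `a b ∈ M`, if `s a < s b`
for every `s ∈ K` then `s a < s b` for every `s ∈ S(M, ≤, u)`. Then `K = S(M, ≤, u)`. -/
theorem compact_convex_subset_eq_stateSpace {M : Type*} [AddCommMonoid M] [PartialOrder M]
    (hpos : ∀ a : M, 0 ≤ a)
    (hadd : ∀ a b c : M, a ≤ b → a + c ≤ b + c)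
    (u : M) (hu : ∀ x : M, ∃ n : ℕ, x ≤ n • u)
    (K : Set (M → ℝ)) (hKsub : K ⊆ StateSpace M u)
    (hKne : K.Nonempty) (hKcomp : IsCompact K) (hKconv : Convex ℝ K)
    (hsep : ∀ a b : M, (∀ s ∈ K, s a < s b) → ∀ s ∈ StateSpace M u, s a < s b) :
    K = StateSpace M u := by
  classical
  by_contra hne
  obtain ⟨t, htS, htK⟩ := Set.exists_of_ssubset (HasSubset.Subset.ssubset_of_ne hKsub hne)
  -- state generalities
  have hsmul : ∀ s ∈ StateSpace M u, ∀ (n : ℕ) (x : M), s (n • x) = n * s x := by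
    rintro s ⟨hs0, hsadd, -, -⟩ n x
    induction n with
    | zero => simpa using hs0
    | succ n ih => rw [succ_nsmul, hsadd, ih]; push_cast; ring
  have hnn : ∀ s ∈ StateSpace M u, ∀ x : M, 0 ≤ s x := by
    rintro s ⟨hs0, -, hsmono, -⟩ x
    have := hsmono 0 x (hpos x); linarith
  choose N hN using hu
  have hub : ∀ s ∈ StateSpace M u, ∀ x : M, s x ≤ N x := by
    intro s hs x
    obtain ⟨hs0, hsadd, hsmono, hsu⟩ := hs
    have h1 := hsmono x (N x • u) (hN x)
    have h2 := hsmul s ⟨hs0, hsadd, hsmono, hsu⟩ (N x) u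
    rw [hsu, mul_one] at h2
    linarith
  have key : ∀ s ∈ StateSpace M u, ∀ (G : Finset M) (c : M → ℕ) (k : ℕ),
      s ((∑ i ∈ G, c i • i) + k • u) = (∑ i ∈ G, (c i : ℝ) * s i) + k := by
    rintro s hs G c k
    obtain ⟨hs0, hsadd, -, hsu⟩ := hs
    let φ : M →+ ℝ := { toFun := s, map_zero' := hs0, map_add' := hsadd }
    show φ _ = _
    rw [map_add, map_sum]
    have h1 : ∀ i ∈ G, φ (c i • i) = (c i : ℝ) * s i := fun i _ => by
      rw [map_nsmul]; simp [φ, nsmul_eq_mul]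
    have h2 : φ (k • u) = (k : ℝ) := by
      rw [map_nsmul]; simp [φ, nsmul_eq_mul, hsu]
    rw [Finset.sum_congr rfl h1, h2]
  -- Hahn-Banach separation
  obtain ⟨f, α, hft, hfK⟩ := geometric_hahn_banach_point_closed hKconv hKcomp.isClosed htK
  obtain ⟨F, hrepr⟩ := pi_clm_repr f
  set c : M → ℝ := fun i => f (Pi.single i 1) with hc
  obtain ⟨δ, hδdef⟩ : ∃ x : ℝ, x = α - f t := ⟨_, rfl⟩
  have hδ : 0 < δ := by rw [hδdef]; linarith
  obtain ⟨E, hEdef⟩ : ∃ x : ℝ, x = (∑ i ∈ F, (N i : ℝ)) / 2 := ⟨_, rfl⟩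
  have hE : 0 ≤ E := by rw [hEdef]; positivity
  obtain ⟨d, hd⟩ := exists_nat_gt ((2 * E + 1) / δ)
  have hd' : 2 * E + 1 < d * δ := by
    rw [div_lt_iff₀ hδ] at hd; linarith
  have hd0 : 0 < (d : ℝ) := by nlinarith
  obtain ⟨β, hβdef⟩ : ∃ x : ℝ, x = (α + f t) / 2 := ⟨_, rfl⟩
  set p : M → ℤ := fun i => round ((d : ℝ) * c i) with hp
  set q : ℤ := round ((d : ℝ) * β) with hq
  have hqb : |(d : ℝ) * β - q| ≤ 1 / 2 := abs_sub_round _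
  have herr : ∀ s ∈ StateSpace M u, |(∑ i ∈ F, (p i : ℝ) * s i) - d * f s| ≤ E := by
    intro s hs
    rw [hrepr s]
    have heq : (∑ i ∈ F, (p i : ℝ) * s i) - d * (∑ i ∈ F, f (Pi.single i 1) * s i)
        = ∑ i ∈ F, ((p i : ℝ) - d * c i) * s i := by
      rw [Finset.mul_sum, ← Finset.sum_sub_distrib]
      exact Finset.sum_congr rfl fun i _ => by rw [hc]; ring
    rw [heq]
    calc |∑ i ∈ F, ((p i : ℝ) - d * c i) * s i|
        ≤ ∑ i ∈ F, |((p i : ℝ) - d * c i) * s i| := Finset.abs_sum_le_sum_abs _ _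
      _ ≤ ∑ i ∈ F, 1 / 2 * (N i : ℝ) := by
          refine Finset.sum_le_sum fun i _ => ?_
          rw [abs_mul, abs_of_nonneg (hnn s hs i)]
          have h1 : |(p i : ℝ) - (d : ℝ) * c i| ≤ 1 / 2 := by
            rw [abs_sub_comm]; exact abs_sub_round _
          exact mul_le_mul h1 (hub s hs i) (hnn s hs i) (by norm_num)
      _ = E := by rw [hEdef, ← Finset.mul_sum]; ring
  have htn : ∀ n : ℤ, ((n.toNat : ℝ) - ((-n).toNat : ℝ)) = (n : ℝ) := by
    intro n
    have hZ : ((n.toNat : ℤ) - ((-n).toNat : ℤ)) = n := by omega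
    exact_mod_cast hZ
  set a : M := (∑ i ∈ F, (-(p i)).toNat • i) + q.toNat • u with ha
  set b : M := (∑ i ∈ F, (p i).toNat • i) + (-q).toNat • u with hb
  have hdiff : ∀ s ∈ StateSpace M u, s b - s a = (∑ i ∈ F, (p i : ℝ) * s i) - q := by
    intro s hs
    rw [ha, hb, key s hs, key s hs]
    have hsum : (∑ i ∈ F, ((p i).toNat : ℝ) * s i) - (∑ i ∈ F, (((-(p i)).toNat : ℝ)) * s i)
        = ∑ i ∈ F, (p i : ℝ) * s i := by
      rw [← Finset.sum_sub_distrib]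
      exact Finset.sum_congr rfl fun i _ => by rw [← sub_mul, htn]
    have hk : (((-q).toNat : ℝ)) - ((q.toNat : ℝ)) = -(q : ℝ) := by
      have := htn (-q); rw [neg_neg] at this; push_cast at this ⊢; linarith
    linarith
  have hKlt : ∀ s ∈ K, s a < s b := by
    intro s hsK
    have hsS := hKsub hsK
    have h1 := abs_le.1 (herr s hsS)
    have h2 := hdiff s hsS
    have h3 : (d : ℝ) * α < d * f s := mul_lt_mul_of_pos_left (hfK s hsK) hd0
    have h4 : (q : ℝ) ≤ d * β + 1 / 2 := by
      have := abs_le.1 hqb; linarith [this.1]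
    have h6 : (d : ℝ) * β = (d * α) - (d * δ) / 2 := by rw [hβdef, hδdef]; ring
    linarith [h1.1]
  have hlt := hsep a b hKlt t htS
  have h1 := abs_le.1 (herr t htS)
  have h2 := hdiff t htS
  have h5 : (q : ℝ) ≥ d * β - 1 / 2 := by
    have := abs_le.1 hqb; linarith [this.2]
  have h6 : (d : ℝ) * β = (d * α) - (d * δ) / 2 := by rw [hβdef, hδdef]; ring
  have h7 : (d : ℝ) * f t = d * α - d * δ := by rw [hδdef]; ring
  linarith [h1.2]
end

section
/- Let φ : (M, ≤, u) → (N, ≤, v) be a morphism of scaled partially ordered abelian semigroups. Then φ is a stable order embedding if and only if S(M, ≤, u) = { g ∘ φ : g ∈ S(N, ≤, v) }. -/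
/-- A morphism `φ : (M, ≤, u) → (N, ≤, v)` of scaled partially ordered abelian
semigroups is a stable order embedding iff for all `x y : M`:
`∃ n > 0, ∃ z, n • x + z + u ≤ n • y + z` iff
`∃ m > 0, ∃ w, m • φ x + v + w ≤ m • φ y + w`. -/
def IsStableOrderEmbedding {M N : Type*} [AddCommMonoid M] [PartialOrder M]
    [AddCommMonoid N] [PartialOrder N] (u : M) (v : N) (φ : M → N) : Prop :=
  ∀ x y : M,
    (∃ n : ℕ, 0 < n ∧ ∃ z : M, n • x + z + u ≤ n • y + z) ↔
      (∃ m : ℕ, 0 < m ∧ ∃ w : N, m • φ x + v + w ≤ m • φ y + w)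

section Abstract

variable {M : Type*} [AddCommMonoid M]

/-- A "good" stably-closed preordering on `M` with order unit `u`. -/
structure GoodRel (M : Type*) [AddCommMonoid M] (u : M) : Type _ where
  R : M → M → Prop
  zero_le : ∀ a, R 0 a
  rtrans : ∀ {a b c}, R a b → R b c → R a c
  add_right : ∀ {a b} (c : M), R a b → R (a + c) (b + c)
  cancel : ∀ {a b} (c : M), R (a + c) (b + c) → R a b
  unit : ∀ a, ∃ n : ℕ, R a (n • u)
  nondeg : ¬ R u 0

namespace GoodRel

variable {u : M} (G : GoodRel M u)

lemma rrefl (a : M) : G.R a a := by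
  have h := G.add_right a (G.zero_le 0)
  simpa using h

lemma add_le_add {a b c d : M} (h1 : G.R a b) (h2 : G.R c d) : G.R (a + c) (b + d) := by
  have h3 := G.add_right c h1
  have h4 := G.add_right b h2
  rw [add_comm c b, add_comm d b] at h4
  exact G.rtrans h3 h4

lemma smul_le {a b : M} (n : ℕ) (h : G.R a b) : G.R (n • a) (n • b) := by
  induction n with
  | zero => simpa using G.zero_le 0
  | succ k ih =>
      rw [succ_nsmul, succ_nsmul]
      exact G.add_le_add ih h

lemma smul_u_cancel {n m : ℕ} (h : G.R (n • u) (m • u)) : n ≤ m := by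
  by_contra hc
  push_neg at hc
  -- m < n, derive R u 0
  have hnm : n = m + (n - m) := by omega
  have h1 : G.R ((n - m) • u + m • u) (0 + m • u) := by
    rw [zero_add]
    rw [hnm, add_nsmul] at h
    rwa [add_comm] at h
  have h2 : G.R ((n - m) • u) 0 := G.cancel _ h1
  have h3 : G.R u ((n - m) • u) := by
    have : n - m = 1 + (n - m - 1) := by omega
    rw [this, add_nsmul, one_nsmul]
    have := G.add_right u (G.zero_le ((n - m - 1) • u))
    rw [zero_add, add_comm] at this
    exact this
  exact G.nondeg (G.rtrans h3 h2)

/-- A partial state for `G`. -/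
structure PState (G : GoodRel M u) : Type _ where
  dom : AddSubmonoid M
  f : M → ℝ
  u_mem : u ∈ dom
  addOn : ∀ a ∈ dom, ∀ b ∈ dom, f (a + b) = f a + f b
  mono : ∀ a ∈ dom, ∀ b ∈ dom, G.R a b → f a ≤ f b
  map_u : f u = 1

namespace PState

variable {G} (p : PState G)

lemma f_zero : p.f 0 = 0 := by
  have := p.addOn 0 (zero_mem _) 0 (zero_mem _)
  simp at this
  linarith

lemma f_nsmul {a : M} (ha : a ∈ p.dom) (n : ℕ) : p.f (n • a) = n * p.f a := by
  induction n with
  | zero => simpa using p.f_zero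
  | succ k ih =>
      rw [succ_nsmul, p.addOn _ (nsmul_mem ha k) _ ha, ih]
      push_cast; ring

instance : Preorder (PState G) where
  le p q := p.dom ≤ q.dom ∧ ∀ x ∈ p.dom, q.f x = p.f x
  le_refl p := ⟨le_rfl, fun _ _ => rfl⟩
  le_trans p q r h1 h2 :=
    ⟨h1.1.trans h2.1, fun x hx => (h2.2 x (h1.1 hx)).trans (h1.2 x hx)⟩

end PState

/-- One-step extension of a partial state. -/
lemma exists_step (p : PState G) (g : M) (hg : g ∉ p.dom) :
    ∃ q : PState G, p ≤ q ∧ g ∈ q.dom := by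
  classical
  set H := p.dom with hH
  set f := p.f with hf
  -- the set of upper constraints
  set B : Set ℝ := {r | ∃ a ∈ H, ∃ b ∈ H, ∃ m k : ℕ, k < m ∧ G.R (a + m • g) (b + k • g) ∧
      r = (f b - f a) / ((m : ℝ) - k)} with hB
  set A : Set ℝ := {r | ∃ a ∈ H, ∃ b ∈ H, ∃ m k : ℕ, m < k ∧ G.R (a + m • g) (b + k • g) ∧
      r = (f a - f b) / ((k : ℝ) - m)} with hA
  have hBne : B.Nonempty := by
    obtain ⟨n, hn⟩ := G.unit g
    refine ⟨((f (n • u) - f 0) / ((1 : ℝ) - 0)), 0, zero_mem _, n • u, nsmul_mem p.u_mem n,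
      1, 0, one_pos, ?_, by norm_num⟩
    simpa using hn
  have hAne : (0 : ℝ) ∈ A := by
    refine ⟨0, zero_mem _, 0, zero_mem _, 0, 1, one_pos, ?_, by simp⟩
    simpa using G.zero_le g
  have cross : ∀ x ∈ A, ∀ y ∈ B, x ≤ y := by
    rintro x ⟨a1, ha1, b1, hb1, m1, k1, hmk1, hr1, rfl⟩ y ⟨a2, ha2, b2, hb2, m2, k2, hmk2, hr2, rfl⟩
    set pp := k1 - m1 with hpp
    set qq := m2 - k2 with hqq
    have hppos : 0 < pp := by omega
    have hqpos : 0 < qq := by omega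
    have hR1 : G.R (qq • (a1 + m1 • g)) (qq • (b1 + k1 • g)) := G.smul_le _ hr1
    have hR2 : G.R (pp • (a2 + m2 • g)) (pp • (b2 + k2 • g)) := G.smul_le _ hr2
    have hR3 := G.add_le_add hR1 hR2
    have e1 : qq • (a1 + m1 • g) + pp • (a2 + m2 • g)
        = (qq • a1 + pp • a2) + (qq * m1 + pp * m2) • g := by
      rw [smul_add, smul_add, smul_smul, smul_smul, add_nsmul]
      abel
    have e2 : qq • (b1 + k1 • g) + pp • (b2 + k2 • g)
        = (qq • b1 + pp • b2) + (qq * k1 + pp * k2) • g := by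
      rw [smul_add, smul_add, smul_smul, smul_smul, add_nsmul]
      abel
    have hcoef : qq * m1 + pp * m2 = qq * k1 + pp * k2 := by
      have h1 : k1 = m1 + pp := by omega
      have h2 : m2 = k2 + qq := by omega
      rw [h1, h2]; ring
    rw [e1, e2, hcoef] at hR3
    have hR4 : G.R (qq • a1 + pp • a2) (qq • b1 + pp • b2) := G.cancel _ hR3
    have hmem1 : qq • a1 + pp • a2 ∈ H := add_mem (nsmul_mem ha1 qq) (nsmul_mem ha2 pp)
    have hmem2 : qq • b1 + pp • b2 ∈ H := add_mem (nsmul_mem hb1 qq) (nsmul_mem hb2 pp)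
    have hle := p.mono _ hmem1 _ hmem2 hR4
    rw [p.addOn _ (nsmul_mem ha1 qq) _ (nsmul_mem ha2 pp),
        p.addOn _ (nsmul_mem hb1 qq) _ (nsmul_mem hb2 pp),
        p.f_nsmul ha1, p.f_nsmul ha2, p.f_nsmul hb1, p.f_nsmul hb2] at hle
    have hpr : (0 : ℝ) < (k1 : ℝ) - m1 := by
      have : (m1 : ℝ) < k1 := by exact_mod_cast hmk1
      linarith
    have hqr : (0 : ℝ) < (m2 : ℝ) - k2 := by
      have : (k2 : ℝ) < m2 := by exact_mod_cast hmk2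
      linarith
    rw [div_le_div_iff₀ hpr hqr]
    have hppr : ((pp : ℝ)) = (k1 : ℝ) - m1 := by
      have : (k1 : ℕ) = m1 + pp := by omega
      rw [this]; push_cast; ring
    have hqqr : ((qq : ℝ)) = (m2 : ℝ) - k2 := by
      have : (m2 : ℕ) = k2 + qq := by omega
      rw [this]; push_cast; ring
    rw [← hppr, ← hqqr]
    nlinarith [hle]
  have hbdd : BddBelow B := ⟨0, fun y hy => cross 0 hAne y hy⟩
  set α : ℝ := sInf B with hα
  -- master inequality
  have master : ∀ a ∈ H, ∀ b ∈ H, ∀ m k : ℕ, G.R (a + m • g) (b + k • g) →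
      f a + m * α ≤ f b + k * α := by
    intro a ha b hb m k hr
    rcases lt_trichotomy m k with h | h | h
    · -- A-datum : α ≥ (f a - f b)/(k - m)
      have hmem : (f a - f b) / ((k : ℝ) - m) ∈ A := ⟨a, ha, b, hb, m, k, h, hr, rfl⟩
      have h1 : (f a - f b) / ((k : ℝ) - m) ≤ α :=
        le_csInf hBne (fun y hy => cross _ hmem y hy)
      have hkr : (0 : ℝ) < (k : ℝ) - m := by
        have : (m : ℝ) < k := by exact_mod_cast h
        linarith
      rw [div_le_iff₀ hkr] at h1
      nlinarith
    · subst h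
      have := p.mono a ha b hb (G.cancel _ hr)
      linarith
    · have hmem : (f b - f a) / ((m : ℝ) - k) ∈ B := ⟨a, ha, b, hb, m, k, h, hr, rfl⟩
      have h1 : α ≤ (f b - f a) / ((m : ℝ) - k) := csInf_le hbdd hmem
      have hkr : (0 : ℝ) < (m : ℝ) - k := by
        have : (k : ℝ) < m := by exact_mod_cast h
        linarith
      rw [le_div_iff₀ hkr] at h1
      nlinarith
  -- new domain
  set dom' : AddSubmonoid M :=
    { carrier := {x | ∃ pr : M × ℕ, pr.1 ∈ H ∧ x = pr.1 + pr.2 • g}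
      zero_mem' := ⟨(0, 0), zero_mem _, by simp⟩
      add_mem' := by
        rintro x y ⟨⟨h1, n1⟩, hh1, rfl⟩ ⟨⟨h2, n2⟩, hh2, rfl⟩
        exact ⟨(h1 + h2, n1 + n2), add_mem hh1 hh2, by simp only [add_nsmul]; abel⟩ } with hdom'
  have memdom' : ∀ x, x ∈ dom' ↔ ∃ pr : M × ℕ, pr.1 ∈ H ∧ x = pr.1 + pr.2 • g := fun x => Iff.rfl
  set f' : M → ℝ := fun x =>
    if h : ∃ pr : M × ℕ, pr.1 ∈ H ∧ x = pr.1 + pr.2 • g then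
      f h.choose.1 + h.choose.2 * α else 0 with hf'
  have wd : ∀ h1 ∈ H, ∀ h2 ∈ H, ∀ n1 n2 : ℕ, h1 + n1 • g = h2 + n2 • g →
      f h1 + n1 * α = f h2 + n2 * α := by
    intro h1 hh1 h2 hh2 n1 n2 he
    have l1 := master h1 hh1 h2 hh2 n1 n2 (he ▸ G.rrefl _)
    have l2 := master h2 hh2 h1 hh1 n2 n1 (he ▸ G.rrefl _)
    linarith
  have f'eq : ∀ h1 ∈ H, ∀ n : ℕ, f' (h1 + n • g) = f h1 + n * α := by
    intro h1 hh1 n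
    have hx : ∃ pr : M × ℕ, pr.1 ∈ H ∧ h1 + n • g = pr.1 + pr.2 • g := ⟨(h1, n), hh1, rfl⟩
    rw [hf']
    simp only [dif_pos hx]
    exact wd _ hx.choose_spec.1 _ hh1 _ _ hx.choose_spec.2.symm
  refine ⟨⟨dom', f', ?_, ?_, ?_, ?_⟩, ⟨?_, ?_⟩, ⟨(0, 1), zero_mem _, by simp⟩⟩
  · exact ⟨(u, 0), p.u_mem, by simp⟩
  · rintro x ⟨⟨h1, n1⟩, hh1, rfl⟩ y ⟨⟨h2, n2⟩, hh2, rfl⟩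
    dsimp only at hh1 hh2 ⊢
    have e : (h1 + n1 • g) + (h2 + n2 • g) = (h1 + h2) + (n1 + n2) • g := by
      rw [add_nsmul]; abel
    rw [e, f'eq _ (add_mem hh1 hh2), f'eq _ hh1, f'eq _ hh2, hf, p.addOn _ hh1 _ hh2]
    push_cast; ring
  · rintro x ⟨⟨h1, n1⟩, hh1, rfl⟩ y ⟨⟨h2, n2⟩, hh2, rfl⟩ hr
    dsimp only at hh1 hh2 hr ⊢
    rw [f'eq _ hh1, f'eq _ hh2]
    exact master _ hh1 _ hh2 _ _ hr
  · show f' u = 1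
    have h0 := f'eq u p.u_mem 0
    rw [zero_nsmul, add_zero] at h0
    rw [h0, hf, p.map_u]
    norm_num
  · intro x hx
    exact ⟨(x, 0), hx, by simp⟩
  · intro x hx
    show f' x = p.f x
    have h0 := f'eq x hx 0
    rw [zero_nsmul, add_zero] at h0
    rw [h0, hf]
    norm_num

/-- Chains of partial states have upper bounds. -/
lemma chain_ub {c : Set (PState G)} (hc : IsChain (· ≤ ·) c) {p1 : PState G} (hp1 : p1 ∈ c) :
    ∃ ub, ∀ z ∈ c, z ≤ ub := by
  classical
  have hdir : ∀ p ∈ c, ∀ q ∈ c, ∃ r ∈ c, p ≤ r ∧ q ≤ r := by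
    intro p hp q hq
    rcases hc.total hp hq with h | h
    · exact ⟨q, hq, h, le_refl q⟩
    · exact ⟨p, hp, le_refl p, h⟩
  set dc : AddSubmonoid M :=
    { carrier := {x | ∃ p ∈ c, x ∈ (p : PState G).dom}
      zero_mem' := ⟨p1, hp1, zero_mem _⟩
      add_mem' := by
        rintro x y ⟨p, hp, hxp⟩ ⟨q, hq, hyq⟩
        obtain ⟨r, hr, hpr, hqr⟩ := hdir p hp q hq
        exact ⟨r, hr, add_mem (hpr.1 hxp) (hqr.1 hyq)⟩ } with hdc
  set fc : M → ℝ := fun x => if h : ∃ p ∈ c, x ∈ (p : PState G).dom then h.choose.f x else 0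
    with hfc
  have fceq : ∀ p ∈ c, ∀ x ∈ (p : PState G).dom, fc x = p.f x := by
    intro p hp x hx
    have hex : ∃ q ∈ c, x ∈ (q : PState G).dom := ⟨p, hp, hx⟩
    rw [hfc]
    simp only [dif_pos hex]
    obtain ⟨r, hr, h1, h2⟩ := hdir _ hex.choose_spec.1 p hp
    rw [← h1.2 x hex.choose_spec.2, ← h2.2 x hx]
  refine ⟨⟨dc, fc, ⟨p1, hp1, p1.u_mem⟩, ?_, ?_, ?_⟩, ?_⟩
  · rintro x ⟨p, hp, hxp⟩ y ⟨q, hq, hyq⟩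
    obtain ⟨r, hr, hpr, hqr⟩ := hdir p hp q hq
    have hxr := hpr.1 hxp
    have hyr := hqr.1 hyq
    rw [fceq r hr _ (add_mem hxr hyr), fceq r hr _ hxr, fceq r hr _ hyr, r.addOn _ hxr _ hyr]
  · rintro x ⟨p, hp, hxp⟩ y ⟨q, hq, hyq⟩ hr
    obtain ⟨r, hrc, hpr, hqr⟩ := hdir p hp q hq
    have hxr := hpr.1 hxp
    have hyr := hqr.1 hyq
    rw [fceq r hrc _ hxr, fceq r hrc _ hyr]
    exact r.mono _ hxr _ hyr hr
  · rw [fceq p1 hp1 u p1.u_mem, p1.map_u]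
  · intro z hz
    refine ⟨fun x hx => ⟨z, hz, hx⟩, fun x hx => fceq z hz x hx⟩

/-- The full extension theorem. -/
theorem exists_total (p0 : PState G) :
    ∃ s : M → ℝ, (∀ a b : M, s (a + b) = s a + s b) ∧ (∀ a b : M, G.R a b → s a ≤ s b) ∧
      s u = 1 ∧ ∀ x ∈ p0.dom, s x = p0.f x := by
  obtain ⟨m, hm0, hmax⟩ := zorn_le_nonempty_Ici₀ p0
    (fun c _ hc y hy => G.chain_ub hc hy) p0 le_rfl
  have htop : ∀ x : M, x ∈ m.dom := by
    intro x
    by_contra hx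
    obtain ⟨q, hmq, hgq⟩ := G.exists_step m x hx
    exact hx ((hmax hmq).1 hgq)
  exact ⟨m.f, fun a b => m.addOn a (htop a) b (htop b),
    fun a b h => m.mono a (htop a) b (htop b) h, m.map_u,
    fun x hx => (hm0.2 x hx)⟩

/-- Existence of a state. -/
theorem exists_state : ∃ s : M → ℝ, (∀ a b : M, s (a + b) = s a + s b) ∧
    (∀ a b : M, G.R a b → s a ≤ s b) ∧ s u = 1 := by
  classical
  have wdu : ∀ n1 n2 : ℕ, n1 • u = n2 • u → n1 = n2 := by
    intro n1 n2 h
    have h1 : G.R (n1 • u) (n2 • u) := h ▸ G.rrefl _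
    have h2 : G.R (n2 • u) (n1 • u) := h ▸ G.rrefl _
    exact le_antisymm (G.smul_u_cancel h1) (G.smul_u_cancel h2)
  set dom0 : AddSubmonoid M :=
    { carrier := {x | ∃ n : ℕ, x = n • u}
      zero_mem' := ⟨0, by simp⟩
      add_mem' := by
        rintro x y ⟨n1, rfl⟩ ⟨n2, rfl⟩
        exact ⟨n1 + n2, by rw [add_nsmul]⟩ } with hdom0
  set f0 : M → ℝ := fun x => if h : ∃ n : ℕ, x = n • u then (h.choose : ℝ) else 0 with hf0
  have f0eq : ∀ n : ℕ, f0 (n • u) = n := by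
    intro n
    have hx : ∃ k : ℕ, n • u = k • u := ⟨n, rfl⟩
    rw [hf0]
    simp only [dif_pos hx]
    exact_mod_cast (wdu n hx.choose hx.choose_spec).symm
  have p0 : PState G := by
    refine ⟨dom0, f0, ⟨1, (one_nsmul u).symm⟩, ?_, ?_, ?_⟩
    · rintro x ⟨n1, rfl⟩ y ⟨n2, rfl⟩
      rw [← add_nsmul, f0eq, f0eq, f0eq]; push_cast; ring
    · rintro x ⟨n1, rfl⟩ y ⟨n2, rfl⟩ hr
      rw [f0eq, f0eq]
      exact_mod_cast G.smul_u_cancel hr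
    · have : (u : M) = 1 • u := (one_nsmul u).symm
      rw [this, f0eq]; norm_num
  obtain ⟨s, h1, h2, h3, _⟩ := G.exists_total p0
  exact ⟨s, h1, h2, h3⟩

end GoodRel

end Abstract

section Concrete

/-- Auxiliary: adding inequalities in a compatible partially ordered monoid. -/
lemma aux_add_le_add {α : Type*} [AddCommMonoid α] [PartialOrder α]
    (hadd : ∀ a b c : α, a ≤ b → a + c ≤ b + c) {a b c d : α} (h1 : a ≤ b) (h2 : c ≤ d) :
    a + c ≤ b + d := by
  calc a + c ≤ b + c := hadd _ _ _ h1
  _ = c + b := add_comm _ _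
  _ ≤ d + b := hadd _ _ _ h2
  _ = b + d := add_comm _ _

lemma aux_smul_le {α : Type*} [AddCommMonoid α] [PartialOrder α]
    (hadd : ∀ a b c : α, a ≤ b → a + c ≤ b + c) {a b : α} (n : ℕ) (h : a ≤ b) :
    n • a ≤ n • b := by
  induction n with
  | zero => simp
  | succ k ih =>
      rw [succ_nsmul, succ_nsmul]
      exact aux_add_le_add hadd ih h

lemma state_nsmul {α : Type*} [AddCommMonoid α] {s : α → ℝ} (h0 : s 0 = 0)
    (hadd : ∀ a b : α, s (a + b) = s a + s b) (n : ℕ) (a : α) : s (n • a) = n * s a := by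
  induction n with
  | zero => simp [zero_nsmul, h0]
  | succ k ih => rw [succ_nsmul, hadd, ih]; push_cast; ring

/-- The stable closure of the order as a `GoodRel`. -/
def stabRel {α : Type*} [AddCommMonoid α] [PartialOrder α] (u : α)
    (hpos : ∀ a : α, 0 ≤ a) (hadd : ∀ a b c : α, a ≤ b → a + c ≤ b + c)
    (hunit : ∀ a : α, ∃ n : ℕ, a ≤ n • u) (hnd : ¬ ∃ c : α, u + c ≤ c) :
    GoodRel α u where
  R a b := ∃ c : α, a + c ≤ b + c
  zero_le a := ⟨0, by simpa using hpos a⟩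
  rtrans := by
    rintro a b e ⟨c1, h1⟩ ⟨c2, h2⟩
    refine ⟨c1 + c2, ?_⟩
    calc a + (c1 + c2) = (a + c1) + c2 := by abel
    _ ≤ (b + c1) + c2 := hadd _ _ _ h1
    _ = (b + c2) + c1 := by abel
    _ ≤ (e + c2) + c1 := hadd _ _ _ h2
    _ = e + (c1 + c2) := by abel
  add_right := by
    rintro a b c ⟨w, h⟩
    refine ⟨w, ?_⟩
    calc (a + c) + w = (a + w) + c := by abel
    _ ≤ (b + w) + c := hadd _ _ _ h
    _ = (b + c) + w := by abel
  cancel := by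
    rintro a b c ⟨w, h⟩
    refine ⟨c + w, ?_⟩
    calc a + (c + w) = (a + c) + w := by abel
    _ ≤ (b + c) + w := h
    _ = b + (c + w) := by abel
  unit a := by
    obtain ⟨n, hn⟩ := hunit a
    exact ⟨n, 0, by simpa using hn⟩
  nondeg := by
    rintro ⟨c, h⟩
    exact hnd ⟨c, by simpa using h⟩

/-- The stable closure of the order enlarged by `x - y` as a `GoodRel`. -/
def stabRel2 {α : Type*} [AddCommMonoid α] [PartialOrder α] (u x y : α)
    (hpos : ∀ a : α, 0 ≤ a) (hadd : ∀ a b c : α, a ≤ b → a + c ≤ b + c)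
    (hunit : ∀ a : α, ∃ n : ℕ, a ≤ n • u) (hnd : ¬ ∃ c : α, u + c ≤ c)
    (hno : ¬ ∃ n : ℕ, 0 < n ∧ ∃ z : α, n • x + z + u ≤ n • y + z) :
    GoodRel α u where
  R a b := ∃ (k : ℕ) (c : α), a + k • x + c ≤ b + k • y + c
  zero_le a := ⟨0, 0, by simpa [zero_nsmul] using hpos a⟩
  rtrans := by
    rintro a b e ⟨k1, c1, h1⟩ ⟨k2, c2, h2⟩
    refine ⟨k1 + k2, c1 + c2, ?_⟩
    calc a + (k1 + k2) • x + (c1 + c2) = (a + k1 • x + c1) + (k2 • x + c2) := by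
          rw [add_nsmul]; abel
    _ ≤ (b + k1 • y + c1) + (k2 • x + c2) := hadd _ _ _ h1
    _ = (b + k2 • x + c2) + (k1 • y + c1) := by abel
    _ ≤ (e + k2 • y + c2) + (k1 • y + c1) := hadd _ _ _ h2
    _ = e + (k1 + k2) • y + (c1 + c2) := by rw [add_nsmul]; abel
  add_right := by
    rintro a b d ⟨k, c, h⟩
    refine ⟨k, c, ?_⟩
    calc (a + d) + k • x + c = (a + k • x + c) + d := by abel
    _ ≤ (b + k • y + c) + d := hadd _ _ _ h
    _ = (b + d) + k • y + c := by abel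
  cancel := by
    rintro a b d ⟨k, c, h⟩
    refine ⟨k, d + c, ?_⟩
    calc a + k • x + (d + c) = (a + d) + k • x + c := by abel
    _ ≤ (b + d) + k • y + c := h
    _ = b + k • y + (d + c) := by abel
  unit a := by
    obtain ⟨n, hn⟩ := hunit a
    exact ⟨n, 0, 0, by simpa [zero_nsmul] using hn⟩
  nondeg := by
    rintro ⟨k, c, h⟩
    rcases Nat.eq_zero_or_pos k with rfl | hk
    · refine hnd ⟨c, ?_⟩
      simpa [zero_nsmul] using h
    · refine hno ⟨k, hk, c, ?_⟩
      calc k • x + c + u = u + k • x + c := by abel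
      _ ≤ 0 + k • y + c := h
      _ = k • y + c := by rw [zero_add]

end Concrete


/-- Let `φ : (M, ≤, u) → (N, ≤, v)` be a morphism of scaled partially ordered abelian
semigroups. Then `φ` is a stable order embedding iff
`S(M, ≤, u) = { g ∘ φ : g ∈ S(N, ≤, v) }`. -/

theorem stableOrderEmbedding_iff_stateSpace_eq
    {M N : Type*} [AddCommMonoid M] [PartialOrder M] [AddCommMonoid N] [PartialOrder N]
    (hposM : ∀ a : M, 0 ≤ a) (haddM : ∀ a b c : M, a ≤ b → a + c ≤ b + c)
    (hposN : ∀ a : N, 0 ≤ a) (haddN : ∀ a b c : N, a ≤ b → a + c ≤ b + c)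
    (u : M) (hu : ∀ x : M, ∃ n : ℕ, x ≤ n • u)
    (v : N) (hv : ∀ x : N, ∃ n : ℕ, x ≤ n • v)
    (φ : M → N) (hφ0 : φ 0 = 0) (hφadd : ∀ x y : M, φ (x + y) = φ x + φ y)
    (hφmono : ∀ x y : M, x ≤ y → φ x ≤ φ y) (hφu : φ u = v) :
    IsStableOrderEmbedding u v φ ↔
      StateSpace M u = {s : M → ℝ | ∃ g ∈ StateSpace N v, s = g ∘ φ} := by
  classical
  have phismul : ∀ (n : ℕ) (a : M), φ (n • a) = n • φ a := by
    intro n a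
    induction n with
    | zero => simp [zero_nsmul, hφ0]
    | succ k ih => rw [succ_nsmul, hφadd, ih, succ_nsmul]
  constructor
  · -- stable order embedding → state spaces agree
    intro hEmb
    ext s
    simp only [StateSpace, Set.mem_setOf_eq]
    constructor
    · intro hs
      obtain ⟨hs0, hsadd, hsmono, hsu⟩ := id hs
      -- N is nondegenerate (otherwise M would be degenerate and s could not exist)
      have hDN : ¬ ∃ w0 : N, v + w0 ≤ w0 := by
        rintro ⟨w0, hw0⟩
        have hkey : (1 : ℕ) • φ u + v + w0 ≤ (1 : ℕ) • φ (0 : M) + w0 := by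
          rw [one_nsmul, one_nsmul, hφu, hφ0, zero_add]
          calc v + v + w0 = (v + w0) + v := by abel
          _ ≤ w0 + v := haddN _ _ _ hw0
          _ = v + w0 := add_comm _ _
          _ ≤ w0 := hw0
        obtain ⟨n, hn, z, hz⟩ := (hEmb u 0).mpr ⟨1, one_pos, w0, hkey⟩
        rw [smul_zero, zero_add] at hz
        have hL := hsmono _ _ hz
        have e1 : s (n • u + z + u) = (n : ℝ) * 1 + s z + 1 := by
          rw [hsadd, hsadd, hsu, state_nsmul hs0 hsadd, hsu]
        rw [e1] at hL
        have : (0:ℝ) ≤ (n:ℝ) := Nat.cast_nonneg n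
        linarith
      -- the good relation on N, and the key monotonicity property
      set GN := stabRel v hposN haddN hv hDN with hGN
      have keymono : ∀ x1 x2 : M, GN.R (φ x1) (φ x2) → s x1 ≤ s x2 := by
        intro x1 x2 hr
        obtain ⟨w, hw⟩ := hr
        refine le_of_forall_pos_le_add fun ε hε => ?_
        obtain ⟨nq, hnq⟩ := exists_nat_one_div_lt hε
        suffices hsuff : s x1 ≤ s x2 + 1 / ((nq : ℝ) + 1) by linarith
        have hsm : (nq+1) • (φ x1) + (nq+1) • w ≤ (nq+1) • (φ x2) + (nq+1) • w := by
          have h := aux_smul_le haddN (nq+1) hw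
          rw [smul_add, smul_add] at h
          exact h
        have key : (1:ℕ) • φ ((nq+1) • x1) + v + ((nq+1) • w)
            ≤ (1:ℕ) • φ ((nq+1) • x2 + u) + ((nq+1) • w) := by
          rw [one_nsmul, one_nsmul, phismul, hφadd, phismul, hφu]
          calc (nq+1) • φ x1 + v + (nq+1) • w
              = ((nq+1) • φ x1 + (nq+1) • w) + v := by abel
          _ ≤ ((nq+1) • φ x2 + (nq+1) • w) + v := haddN _ _ _ hsm
          _ = ((nq+1) • φ x2 + v) + (nq+1) • w := by abel
        obtain ⟨nn, hnn, z, hz⟩ :=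
          (hEmb ((nq+1) • x1) ((nq+1) • x2 + u)).mpr ⟨1, one_pos, (nq+1) • w, key⟩
        have hL := hsmono _ _ hz
        have e1 : s (nn • ((nq+1) • x1) + z + u)
            = (nn : ℝ) * (((nq+1 : ℕ) : ℝ) * s x1) + s z + 1 := by
          rw [hsadd, hsadd, hsu, state_nsmul hs0 hsadd, state_nsmul hs0 hsadd]
        have e2 : s (nn • ((nq+1) • x2 + u) + z)
            = (nn : ℝ) * (((nq+1 : ℕ) : ℝ) * s x2 + 1) + s z := by
          rw [hsadd, state_nsmul hs0 hsadd, hsadd, state_nsmul hs0 hsadd, hsu]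
        rw [e1, e2] at hL
        have hnn1 : (1:ℝ) ≤ (nn:ℝ) := by exact_mod_cast hnn
        have hnn0 : (0:ℝ) < (nn:ℝ) := by linarith
        have h6 : ((nq+1 : ℕ) : ℝ) * s x1 ≤ ((nq+1 : ℕ) : ℝ) * s x2 + 1 := by
          rcases le_or_gt (((nq+1 : ℕ) : ℝ) * s x1) (((nq+1 : ℕ) : ℝ) * s x2 + 1) with h | h
          · exact h
          · exfalso
            have h7 := mul_lt_mul_of_pos_left h hnn0
            rw [mul_add, mul_one] at h7
            linarith
        have h8 : ((nq+1 : ℕ) : ℝ) = (nq : ℝ) + 1 := by push_cast; ring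
        rw [h8] at h6
        have hq0 : (0:ℝ) < (nq : ℝ) + 1 := by positivity
        have h9 : s x1 - s x2 ≤ 1 / ((nq : ℝ) + 1) := by
          rw [le_div_iff₀ hq0]
          nlinarith [h6]
        linarith
      -- the partial state on the image of φ
      set domφ : AddSubmonoid N :=
        { carrier := Set.range φ
          zero_mem' := ⟨0, hφ0⟩
          add_mem' := by
            rintro a b ⟨x1, rfl⟩ ⟨x2, rfl⟩
            exact ⟨x1 + x2, hφadd x1 x2⟩ } with hdomφ
      set f0 : N → ℝ := fun yy => if h : ∃ x0, φ x0 = yy then s h.choose else 0 with hf0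
      have fval : ∀ x0 : M, f0 (φ x0) = s x0 := by
        intro x0
        have hx : ∃ x1, φ x1 = φ x0 := ⟨x0, rfl⟩
        rw [hf0]
        simp only [dif_pos hx]
        have hspec := hx.choose_spec
        have h1 : s hx.choose ≤ s x0 := keymono _ _ ⟨0, by rw [hspec]⟩
        have h2 : s x0 ≤ s hx.choose := keymono _ _ ⟨0, by rw [hspec]⟩
        linarith
      have haddOn : ∀ a ∈ domφ, ∀ b ∈ domφ, f0 (a + b) = f0 a + f0 b := by
        rintro a ⟨x1, rfl⟩ b ⟨x2, rfl⟩
        rw [← hφadd, fval, fval, fval, hsadd]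
      have hmonoOn : ∀ a ∈ domφ, ∀ b ∈ domφ, GN.R a b → f0 a ≤ f0 b := by
        rintro a ⟨x1, rfl⟩ b ⟨x2, rfl⟩ hr
        rw [fval, fval]
        exact keymono _ _ hr
      have hmapu : f0 v = 1 := by rw [← hφu, fval, hsu]
      obtain ⟨g, hgadd, hgmonoR, hgv, hgag⟩ :=
        GN.exists_total ⟨domφ, f0, ⟨u, hφu⟩, haddOn, hmonoOn, hmapu⟩
      have hg0 : g 0 = 0 := by
        have := hgadd 0 0
        simp at this
        linarith
      refine ⟨g, ⟨hg0, hgadd, ?_, hgv⟩, funext fun x0 => ?_⟩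
      · intro a b hab
        exact hgmonoR a b ⟨0, by simpa using hab⟩
      · have h1 : g (φ x0) = f0 (φ x0) := hgag (φ x0) ⟨x0, rfl⟩
        simp only [Function.comp]
        rw [h1, fval]
    · rintro ⟨g, hg, rfl⟩
      obtain ⟨hg0, hgadd, hgmono, hgv⟩ := id hg
      refine ⟨?_, ?_, ?_, ?_⟩
      · simp [Function.comp, hφ0, hg0]
      · intro a b; simp [Function.comp, hφadd, hgadd]
      · intro a b hab; exact hgmono _ _ (hφmono _ _ hab)
      · simp [Function.comp, hφu, hgv]
  · -- state spaces agree → stable order embedding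
    intro hEq x y
    have hEq' : ∀ s : M → ℝ, IsState u s → ∃ g : N → ℝ, IsState v g ∧ s = g ∘ φ := by
      intro s hs
      have hmem : s ∈ StateSpace M u := hs
      rw [hEq] at hmem
      simp only [Set.mem_setOf_eq] at hmem
      obtain ⟨g, hg, hsg⟩ := hmem
      exact ⟨g, hg, hsg⟩
    constructor
    · rintro ⟨n, hn, z, hz⟩
      refine ⟨n, hn, φ z, ?_⟩
      have h := hφmono _ _ hz
      rw [hφadd (n • x + z) u, hφadd (n • x) z, hφu, phismul n x,
        hφadd (n • y) z, phismul n y] at h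
      calc n • φ x + v + φ z = n • φ x + φ z + v := by abel
      _ ≤ n • φ y + φ z := h
    · intro hR
      by_cases hDM : ∃ z0 : M, u + z0 ≤ z0
      · obtain ⟨z0, hz0⟩ := hDM
        obtain ⟨k, hk⟩ := hu x
        have hiter : ∀ j : ℕ, j • u + z0 ≤ z0 := by
          intro j
          induction j with
          | zero => simp
          | succ i ih =>
              calc (i+1) • u + z0 = (u + z0) + i • u := by rw [succ_nsmul]; abel
              _ ≤ z0 + i • u := haddM _ _ _ hz0
              _ = i • u + z0 := add_comm _ _
              _ ≤ z0 := ih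
        refine ⟨1, one_pos, z0, ?_⟩
        rw [one_nsmul, one_nsmul]
        calc x + z0 + u = (x + u) + z0 := by abel
        _ ≤ (k • u + u) + z0 := haddM _ _ _ (haddM _ _ u hk)
        _ = (k+1) • u + z0 := by rw [succ_nsmul]
        _ ≤ z0 := hiter (k+1)
        _ ≤ y + z0 := by simpa using haddM _ _ z0 (hposM y)
      · obtain ⟨m, hm, w, hw⟩ := hR
        by_contra hno
        set GM := stabRel2 u x y hposM haddM hu hDM hno with hGM
        obtain ⟨s, hsadd, hsmonoR, hsu⟩ := GM.exists_state
        have hs0 : s 0 = 0 := by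
          have := hsadd 0 0
          simp at this
          linarith
        have hsIs : IsState u s := by
          refine ⟨hs0, hsadd, ?_, hsu⟩
          intro a b hab
          exact hsmonoR a b ⟨0, 0, by simpa [zero_nsmul] using hab⟩
        have hsyx : s y ≤ s x := by
          refine hsmonoR y x ⟨1, 0, ?_⟩
          simp only [one_nsmul, add_zero]
          exact le_of_eq (add_comm y x)
        obtain ⟨g, hgIs, hsg⟩ := hEq' s hsIs
        obtain ⟨hg0, hgadd, hgmono, hgv⟩ := hgIs
        have h1 := hgmono _ _ hw
        have e1 : g (m • φ x + v + w) = (m : ℝ) * g (φ x) + 1 + g w := by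
          rw [hgadd, hgadd, hgv, state_nsmul hg0 hgadd]
        have e2 : g (m • φ y + w) = (m : ℝ) * g (φ y) + g w := by
          rw [hgadd, state_nsmul hg0 hgadd]
        rw [e1, e2] at h1
        have hgx : g (φ x) = s x := by rw [hsg]; rfl
        have hgy : g (φ y) = s y := by rw [hsg]; rfl
        rw [hgx, hgy] at h1
        have hm1 : (0:ℝ) ≤ (m:ℝ) := Nat.cast_nonneg m
        have : (m:ℝ) * s y ≤ (m:ℝ) * s x := mul_le_mul_of_nonneg_left hsyx hm1
        linarith
end

section
/- Let (M, ≤) be an almost unperforated partially ordered abelian semigroup, let u ∈ M be an order unit, and let x ∈ M. If s(x) < s(u) for every state s ∈ S(M, ≤, u), then x ≤ u. -/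
namespace AUPaux

variable {M : Type*} [AddCommMonoid M] [PartialOrder M]

/-- A weak (cancellative) preorder associated to `≤`. -/
def R (a b : M) : Prop := ∃ c : M, a + c ≤ b + c

lemma r_refl (a : M) : R a a := ⟨0, le_rfl⟩

lemma r_of_le {a b : M} (hadd : ∀ a b c : M, a ≤ b → a + c ≤ b + c) (h : a ≤ b) : R a b :=
  ⟨0, hadd _ _ _ h⟩

lemma r_trans (hadd : ∀ a b c : M, a ≤ b → a + c ≤ b + c) {a b c : M}
    (h1 : R a b) (h2 : R b c) : R a c := by
  obtain ⟨w, hw⟩ := h1; obtain ⟨v, hv⟩ := h2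
  refine ⟨w + v, ?_⟩
  calc a + (w + v) = (a + w) + v := by abel
    _ ≤ (b + w) + v := hadd _ _ _ hw
    _ = (b + v) + w := by abel
    _ ≤ (c + v) + w := hadd _ _ _ hv
    _ = c + (w + v) := by abel

lemma r_add (hadd : ∀ a b c : M, a ≤ b → a + c ≤ b + c) {a b c d : M}
    (h1 : R a b) (h2 : R c d) : R (a + c) (b + d) := by
  obtain ⟨w, hw⟩ := h1; obtain ⟨v, hv⟩ := h2
  refine ⟨w + v, ?_⟩
  calc a + c + (w + v) = (a + w) + (c + v) := by abel
    _ ≤ (b + w) + (c + v) := hadd _ _ _ hw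
    _ = (c + v) + (b + w) := by abel
    _ ≤ (d + v) + (b + w) := hadd _ _ _ hv
    _ = b + d + (w + v) := by abel

lemma r_cancel {a b c : M} (h : R (a + c) (b + c)) : R a b := by
  obtain ⟨w, hw⟩ := h
  exact ⟨c + w, by rwa [← add_assoc, ← add_assoc]⟩

lemma r_smul (hadd : ∀ a b c : M, a ≤ b → a + c ≤ b + c) {a b : M}
    (h : R a b) (n : ℕ) : R (n • a) (n • b) := by
  induction n with
  | zero => simpa using r_refl (0 : M)
  | succ n ih =>
    rw [succ_nsmul, succ_nsmul]
    exact r_add hadd ih h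

lemma le_self_add' (hpos : ∀ a : M, 0 ≤ a) (hadd : ∀ a b c : M, a ≤ b → a + c ≤ b + c)
    (a b : M) : a ≤ a + b := by
  simpa [add_comm] using hadd 0 b a (hpos b)

lemma hadd_left (hadd : ∀ a b c : M, a ≤ b → a + c ≤ b + c) {a b : M} (c : M)
    (h : a ≤ b) : c + a ≤ c + b := by
  rw [add_comm c a, add_comm c b]; exact hadd _ _ _ h

lemma nsmul_le_nsmul' (hpos : ∀ a : M, 0 ≤ a) (hadd : ∀ a b c : M, a ≤ b → a + c ≤ b + c)
    {m n : ℕ} (h : m ≤ n) (a : M) : m • a ≤ n • a := by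
  obtain ⟨k, rfl⟩ := Nat.exists_eq_add_of_le h
  rw [add_nsmul]
  exact le_self_add' hpos hadd _ _

/-- Lemma B : if `Q • y ≼ P • u` with `P < Q` then `y ≤ u`. -/
lemma lemB (hpos : ∀ a : M, 0 ≤ a) (hadd : ∀ a b c : M, a ≤ b → a + c ≤ b + c)
    (haup : ∀ x y : M, ∀ k k' : ℕ, k' < k → k • x ≤ k' • y → x ≤ y)
    (u : M) (hu : ∀ y : M, ∃ n : ℕ, y ≤ n • u) {y : M} {P Q : ℕ}
    (hPQ : P < Q) (h : R (Q • y) (P • u)) : y ≤ u := by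
  obtain ⟨c, hc⟩ := h
  obtain ⟨m, hm⟩ := hu c
  have step : ∀ n : ℕ, n • (Q • y) + c ≤ n • (P • u) + c := by
    intro n
    induction n with
    | zero => simp
    | succ n ih =>
      calc (n+1) • (Q • y) + c = (n • (Q • y) + c) + Q • y := by rw [succ_nsmul]; abel
        _ ≤ (n • (P • u) + c) + Q • y := hadd _ _ _ ih
        _ = (Q • y + c) + n • (P • u) := by abel
        _ ≤ (P • u + c) + n • (P • u) := hadd _ _ _ hc
        _ = (n+1) • (P • u) + c := by rw [succ_nsmul]; abel
  have h2 : ((m + 1) * Q) • y ≤ ((m + 1) * P + m) • u := by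
    calc ((m + 1) * Q) • y = (m + 1) • (Q • y) := by rw [mul_smul]
      _ ≤ (m + 1) • (Q • y) + c := le_self_add' hpos hadd _ _
      _ ≤ (m + 1) • (P • u) + c := step (m + 1)
      _ ≤ (m + 1) • (P • u) + m • u := hadd_left hadd _ hm
      _ = ((m + 1) * P + m) • u := by
          have e4 : ((m + 1) * P + m) • u = (m + 1) • (P • u) + m • u := by
            rw [add_nsmul, mul_smul]
          rw [e4]
  refine haup y u ((m + 1) * Q) ((m + 1) * P + m) ?_ h2
  have hQ : P + 1 ≤ Q := hPQ
  calc (m + 1) * P + m < (m + 1) * P + (m + 1) := by omega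
    _ = (m + 1) * (P + 1) := by ring
    _ ≤ (m + 1) * Q := Nat.mul_le_mul_left _ hQ

lemma nat_pow_aux (m p q : ℕ) (h : p < q) : ∃ k : ℕ, m * p ^ k < q ^ k := by
  rcases Nat.eq_zero_or_pos p with hp | hp
  · refine ⟨1, ?_⟩
    simp [hp]
    omega
  · have hq0 : (0 : ℝ) < (q : ℝ) := by
      have : 0 < q := by omega
      exact_mod_cast this
    have h1 : (p : ℝ) / q < 1 := by
      rw [div_lt_one hq0]; exact_mod_cast h
    have h0 : (0 : ℝ) < 1 / (m + 1) := by positivity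
    obtain ⟨k, hk⟩ := exists_pow_lt_of_lt_one h0 h1
    refine ⟨k, ?_⟩
    have hqk : (0 : ℝ) < (q : ℝ) ^ k := by positivity
    have hm1 : (0 : ℝ) < (m : ℝ) + 1 := by positivity
    rw [div_pow, div_lt_div_iff₀ hqk hm1] at hk
    have hpk : (0 : ℝ) ≤ (p : ℝ) ^ k := by positivity
    have : (m : ℝ) * (p : ℝ) ^ k < (q : ℝ) ^ k := by nlinarith
    exact_mod_cast this

/-- Monotone condition for a graph of a partial state. -/
def MonoG (G : Set (M × ℝ)) : Prop := ∀ pp ∈ G, ∀ qq ∈ G, R pp.1 qq.1 → pp.2 ≤ qq.2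

/-- Additivity condition for a graph of a partial state. -/
def AddG (G : Set (M × ℝ)) : Prop := ∀ pp ∈ G, ∀ qq ∈ G, (pp.1 + qq.1, pp.2 + qq.2) ∈ G

lemma smulG {G : Set (M × ℝ)} (hG : AddG G) (h0 : ((0 : M), (0 : ℝ)) ∈ G)
    {a : M} {r : ℝ} (hp : (a, r) ∈ G) (n : ℕ) : (n • a, (n : ℝ) * r) ∈ G := by
  induction n with
  | zero => simpa using h0
  | succ n ih =>
    have := hG _ ih _ hp
    simp only at this
    have e1 : (n + 1) • a = n • a + a := succ_nsmul a n
    have e2 : ((n : ℝ) + 1) * r = (n : ℝ) * r + r := by ring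
    rw [e1]
    push_cast
    rw [e2]
    exact this

/-- The extension lemma: a partial state graph can be extended to any new element. -/
lemma extend (hpos : ∀ a : M, 0 ≤ a) (hadd : ∀ a b c : M, a ≤ b → a + c ≤ b + c)
    (u : M) (hu : ∀ y : M, ∃ n : ℕ, y ≤ n • u) (G : Set (M × ℝ))
    (hmono : MonoG G) (hG : AddG G) (h0 : ((0 : M), (0 : ℝ)) ∈ G)
    (h1 : (u, (1 : ℝ)) ∈ G) (z : M) :
    ∃ G' : Set (M × ℝ), ∃ t : ℝ, G ⊆ G' ∧ (z, t) ∈ G' ∧ MonoG G' ∧ AddG G' ∧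
      (∀ c : ℝ, (∀ (k : ℕ) (a : M) (r : ℝ) (b : M) (s : ℝ),
        0 < k → (a, r) ∈ G → (b, s) ∈ G → R (a + k • z) b → c ≤ (s - r) / k) → c ≤ t) := by
  classical
  set U : Set ℝ := {v | ∃ (k : ℕ) (a : M) (r : ℝ) (b : M) (s : ℝ),
    0 < k ∧ (a, r) ∈ G ∧ (b, s) ∈ G ∧ R (a + k • z) b ∧ v = (s - r) / k} with hU
  obtain ⟨n₀, hn₀⟩ := hu z
  have hUne : U.Nonempty := by
    refine ⟨((n₀ : ℝ) - 0) / ((1 : ℕ) : ℝ), 1, 0, 0, n₀ • u, (n₀ : ℝ), one_pos, h0, ?_, ?_, rfl⟩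
    · simpa using smulG hG h0 h1 n₀
    · exact r_of_le hadd (by simpa using hn₀)
  have hU0 : ∀ v ∈ U, (0 : ℝ) ≤ v := by
    rintro v ⟨k, a, r, b, s, hk, ha, hb, hr, rfl⟩
    have h1' : R a (a + k • z) := r_of_le hadd (le_self_add' hpos hadd _ _)
    have hrs : r ≤ s := hmono _ ha _ hb (r_trans hadd h1' hr)
    have hkR : (0 : ℝ) < (k : ℝ) := by exact_mod_cast hk
    exact div_nonneg (by linarith) hkR.le
  have hBdd : BddBelow U := ⟨0, fun v hv => hU0 v hv⟩
  set t : ℝ := sInf U with ht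
  -- upper bound : t ≤ every element of U
  have hUb : ∀ (k : ℕ) (a : M) (r : ℝ) (b : M) (s : ℝ), 0 < k → (a, r) ∈ G → (b, s) ∈ G →
      R (a + k • z) b → t ≤ (s - r) / k := by
    intro k a r b s hk ha hb hr
    exact csInf_le hBdd ⟨k, a, r, b, s, hk, ha, hb, hr, rfl⟩
  -- lower bound : every "L-element" is ≤ t
  have hL : ∀ (k' : ℕ) (a' : M) (r' : ℝ) (b' : M) (s' : ℝ), 0 < k' → (a', r') ∈ G →
      (b', s') ∈ G → R a' (b' + k' • z) → (r' - s') / k' ≤ t := by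
    intro k' a' r' b' s' hk' ha' hb' hr'
    refine le_csInf hUne ?_
    rintro v ⟨k, a, r, b, s, hk, ha, hb, hr, rfl⟩
    -- cross inequality
    have c1 : R (k • a') (k • b' + (k * k') • z) := by
      have := r_smul hadd hr' k
      rwa [smul_add, smul_smul] at this
    have c2 : R (k' • a + (k' * k) • z) (k' • b) := by
      have := r_smul hadd hr k'
      rwa [smul_add, smul_smul] at this
    have main : R (k • a' + k' • a) (k • b' + k' • b) := by
      have s1 : R (k • a' + k' • a) ((k • b' + (k * k') • z) + k' • a) :=
        r_add hadd c1 (r_refl _)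
      have e : (k • b' + (k * k') • z) + k' • a = k • b' + (k' • a + (k' * k) • z) := by
        rw [mul_comm k k']; abel
      have s2 : R (k • b' + (k' • a + (k' * k) • z)) (k • b' + k' • b) :=
        r_add hadd (r_refl _) c2
      exact r_trans hadd (e ▸ s1) s2
    have hmem1 : (k • a' + k' • a, (k : ℝ) * r' + (k' : ℝ) * r) ∈ G :=
      hG _ (smulG hG h0 ha' k) _ (smulG hG h0 ha k')
    have hmem2 : (k • b' + k' • b, (k : ℝ) * s' + (k' : ℝ) * s) ∈ G :=
      hG _ (smulG hG h0 hb' k) _ (smulG hG h0 hb k')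
    have hval : (k : ℝ) * r' + (k' : ℝ) * r ≤ (k : ℝ) * s' + (k' : ℝ) * s :=
      hmono _ hmem1 _ hmem2 main
    have hkR : (0 : ℝ) < (k : ℝ) := by exact_mod_cast hk
    have hk'R : (0 : ℝ) < (k' : ℝ) := by exact_mod_cast hk'
    rw [div_le_div_iff₀ hk'R hkR]
    nlinarith
  -- the extension
  refine ⟨{pp | ∃ (a : M) (r : ℝ) (n : ℕ), (a, r) ∈ G ∧ pp = (a + n • z, r + n * t)}, t,
    ?_, ?_, ?_, ?_, ?_⟩
  · intro pp hpp
    exact ⟨pp.1, pp.2, 0, hpp, by simp⟩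
  · exact ⟨0, 0, 1, h0, by simp⟩
  · rintro pp ⟨a, r, n, ha, rfl⟩ qq ⟨b, s, m, hb, rfl⟩ hR
    simp only at hR ⊢
    rcases le_or_gt n m with hnm | hnm
    · rcases eq_or_lt_of_le hnm with rfl | hlt
      · -- n = m : cancel
        have : R a b := r_cancel (c := n • z) (by
          have e1 : a + n • z = a + n • z := rfl
          exact hR)
        have := hmono _ ha _ hb this
        linarith
      · -- n < m
        have hcan : R a (b + (m - n) • z) := by
          apply r_cancel (c := n • z)
          have e : b + (m - n) • z + n • z = b + m • z := by
            rw [add_assoc, ← add_nsmul, Nat.sub_add_cancel hnm]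
          rwa [e]
        have hle := hL (m - n) a r b s (by omega) ha hb hcan
        have hpos' : (0 : ℝ) < ((m - n : ℕ) : ℝ) := by
          exact_mod_cast Nat.sub_pos_of_lt hlt
        rw [div_le_iff₀ hpos'] at hle
        have hcast : ((m - n : ℕ) : ℝ) = (m : ℝ) - (n : ℝ) := by
          push_cast [Nat.cast_sub hnm]; ring
        rw [hcast] at hle
        nlinarith
    · -- m < n
      have hcan : R (a + (n - m) • z) b := by
        apply r_cancel (c := m • z)
        have e : a + (n - m) • z + m • z = a + n • z := by
          rw [add_assoc, ← add_nsmul, Nat.sub_add_cancel hnm.le]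
        rwa [e]
      have hle := hUb (n - m) a r b s (by omega) ha hb hcan
      have hpos' : (0 : ℝ) < ((n - m : ℕ) : ℝ) := by
        exact_mod_cast Nat.sub_pos_of_lt hnm
      rw [le_div_iff₀ hpos'] at hle
      have hcast : ((n - m : ℕ) : ℝ) = (n : ℝ) - (m : ℝ) := by
        push_cast [Nat.cast_sub hnm.le]; ring
      rw [hcast] at hle
      nlinarith
  · rintro pp ⟨a, r, n, ha, rfl⟩ qq ⟨b, s, m, hb, rfl⟩
    refine ⟨a + b, r + s, n + m, hG _ ha _ hb, ?_⟩
    simp only [Prod.mk.injEq]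
    constructor
    · rw [add_nsmul]; abel
    · push_cast; ring
  · intro c hc
    refine le_csInf hUne ?_
    rintro v ⟨k, a, r, b, s, hk, ha, hb, hr, rfl⟩
    exact hc k a r b s hk ha hb hr

end AUPaux

open AUPaux in
/-- Let `(M, ≤)` be an almost unperforated partially ordered abelian semigroup,
`u` an order unit and `x ∈ M`. If `s x < s u` for every state `s ∈ S(M, ≤, u)`,
then `x ≤ u`. -/
theorem le_of_state_lt_of_almostUnperforated {M : Type*} [AddCommMonoid M] [PartialOrder M]
    (hpos : ∀ a : M, 0 ≤ a)
    (hadd : ∀ a b c : M, a ≤ b → a + c ≤ b + c)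
    (haup : ∀ x y : M, ∀ k k' : ℕ, k' < k → k • x ≤ k' • y → x ≤ y)
    (u : M) (hu : ∀ x : M, ∃ n : ℕ, x ≤ n • u)
    (x : M) (hx : ∀ s ∈ StateSpace M u, s x < s u) :
    x ≤ u := by
  classical
  by_contra hcon
  -- key consequences of ¬ (x ≤ u)
  have H : ∀ p q : ℕ, p < q → ¬ R ((q : ℕ) • x) (p • u) := by
    intro p q hpq hr
    exact hcon (lemB hpos hadd haup u hu hpq hr)
  have Hu : ∀ p q : ℕ, p < q → ¬ R ((q : ℕ) • u) (p • u) := by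
    intro p q hpq hr
    obtain ⟨m, hm⟩ := hu x
    have key : ∀ k : ℕ, R ((q ^ k) • x) ((m * p ^ k) • u) := by
      intro k
      induction k with
      | zero => simpa using r_of_le hadd hm
      | succ k ih =>
        have e1 : q ^ (k + 1) • x = q • ((q ^ k) • x) := by
          rw [pow_succ', mul_smul]
        have s1 : R (q • ((q ^ k) • x)) (q • ((m * p ^ k) • u)) := r_smul hadd ih q
        have e2 : q • ((m * p ^ k) • u) = (m * p ^ k) • (q • u) := by
          rw [smul_smul, smul_smul, mul_comm]
        have s2 : R ((m * p ^ k) • (q • u)) ((m * p ^ k) • (p • u)) := r_smul hadd hr _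
        have e3 : (m * p ^ k) • (p • u) = (m * p ^ (k + 1)) • u := by
          rw [smul_smul, show m * p ^ k * p = m * p ^ (k + 1) by ring]
        rw [e1]
        exact r_trans hadd (r_trans hadd s1 (e2 ▸ r_refl _)) (e3 ▸ s2)
    obtain ⟨k, hk⟩ := nat_pow_aux m p q hpq
    exact H (m * p ^ k) (q ^ k) hk (key k)
  -- the base graph : multiples of u
  set G₀ : Set (M × ℝ) := Set.range (fun n : ℕ => ((n • u : M), (n : ℝ))) with hG₀def
  have h00 : ((0 : M), (0 : ℝ)) ∈ G₀ := ⟨0, by simp⟩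
  have h01 : (u, (1 : ℝ)) ∈ G₀ := ⟨1, by simp⟩
  have hG₀add : AddG G₀ := by
    rintro pp ⟨n, rfl⟩ qq ⟨m, rfl⟩
    exact ⟨n + m, by simp [add_nsmul]⟩
  have hG₀mono : MonoG G₀ := by
    rintro pp ⟨n, rfl⟩ qq ⟨m, rfl⟩ hR
    simp only at hR ⊢
    have : n ≤ m := by
      by_contra hlt
      exact Hu m n (by omega) hR
    exact_mod_cast this
  -- first extension : add x with value t₁ ≥ 1
  obtain ⟨G₁, t₁, hsub₁, hx₁, hmono₁, hadd₁, hinf₁⟩ :=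
    extend hpos hadd u hu G₀ hG₀mono hG₀add h00 h01 x
  have ht₁ : (1 : ℝ) ≤ t₁ := by
    refine hinf₁ 1 ?_
    intro k a r b s hk ha hb hr
    obtain ⟨p, hp⟩ := ha
    obtain ⟨q, hq⟩ := hb
    have hpa : a = p • u ∧ r = (p : ℝ) := by
      constructor <;> · have := hp; rw [Prod.ext_iff] at this; tauto
    have hqb : b = q • u ∧ s = (q : ℝ) := by
      constructor <;> · have := hq; rw [Prod.ext_iff] at this; tauto
    obtain ⟨ha', hr'⟩ := hpa
    obtain ⟨hb', hs'⟩ := hqb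
    subst ha' hr' hb' hs'
    -- show p + k ≤ q
    have hpkq : p + k ≤ q := by
      by_contra hlt
      push_neg at hlt
      rcases le_or_gt p q with hpq | hpq
      · -- cancel p • u : k • x ≼ (q - p) • u with q - p < k
        have hcan : R (k • x) ((q - p) • u) := by
          apply r_cancel (c := p • u)
          have e1 : k • x + p • u = p • u + k • x := by abel
          have e2 : (q - p) • u + p • u = q • u := by
            rw [← add_nsmul, Nat.sub_add_cancel hpq]
          rw [e1, e2]
          exact hr
        exact H (q - p) k (by omega) hcan
      · -- q < p : then k • x ≼ 0
        have hqp : R (q • u) (p • u) :=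
          r_of_le hadd (nsmul_le_nsmul' hpos hadd hpq.le u)
        have hcan : R (k • x) ((0 : ℕ) • u) := by
          apply r_cancel (c := p • u)
          have e1 : k • x + p • u = p • u + k • x := by abel
          have e2 : (0 : ℕ) • u + p • u = p • u := by simp
          rw [e1, e2]
          exact r_trans hadd hr hqp
        exact H 0 k hk hcan
    have hkR : (0 : ℝ) < (k : ℝ) := by exact_mod_cast hk
    rw [le_div_iff₀ hkR]
    have : (p : ℝ) + k ≤ q := by exact_mod_cast hpkq
    linarith only [this]
  -- Zorn's lemma
  set S : Set (Set (M × ℝ)) := {G | G₁ ⊆ G ∧ MonoG G ∧ AddG G} with hSdef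
  have hG₁S : G₁ ∈ S := ⟨subset_rfl, hmono₁, hadd₁⟩
  have hzorn : ∀ c ⊆ S, IsChain (· ⊆ ·) c → c.Nonempty →
      ∃ ub ∈ S, ∀ s ∈ c, s ⊆ ub := by
    intro c hcS hchain hcne
    obtain ⟨G, hGc⟩ := hcne
    refine ⟨⋃₀ c, ⟨(hcS hGc).1.trans (Set.subset_sUnion_of_mem hGc), ?_, ?_⟩,
      fun s hs => Set.subset_sUnion_of_mem hs⟩
    · rintro pp ⟨Gi, hGi, hppi⟩ qq ⟨Gj, hGj, hqqj⟩ hR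
      rcases eq_or_ne Gi Gj with rfl | hne
      · exact (hcS hGi).2.1 _ hppi _ hqqj hR
      · rcases hchain hGi hGj hne with hsub | hsub
        · exact (hcS hGj).2.1 _ (hsub hppi) _ hqqj hR
        · exact (hcS hGi).2.1 _ hppi _ (hsub hqqj) hR
    · rintro pp ⟨Gi, hGi, hppi⟩ qq ⟨Gj, hGj, hqqj⟩
      rcases eq_or_ne Gi Gj with rfl | hne
      · exact Set.mem_sUnion_of_mem ((hcS hGi).2.2 _ hppi _ hqqj) hGi
      · rcases hchain hGi hGj hne with hsub | hsub
        · exact Set.mem_sUnion_of_mem ((hcS hGj).2.2 _ (hsub hppi) _ hqqj) hGj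
        · exact Set.mem_sUnion_of_mem ((hcS hGi).2.2 _ hppi _ (hsub hqqj)) hGi
  obtain ⟨Gm, hGm₁, hGmmax⟩ := zorn_subset_nonempty S hzorn G₁ hG₁S
  have hGmS := hGmmax.1
  have h00m : ((0 : M), (0 : ℝ)) ∈ Gm := hGmS.1 (hsub₁ h00)
  have h01m : (u, (1 : ℝ)) ∈ Gm := hGmS.1 (hsub₁ h01)
  have hmonoGm : MonoG Gm := hGmS.2.1
  have haddGm : AddG Gm := hGmS.2.2
  -- the maximal graph is total
  have htot : ∀ z : M, ∃ r : ℝ, (z, r) ∈ Gm := by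
    intro z
    by_contra hz
    push_neg at hz
    obtain ⟨G', t, hsub, hzt, hm', ha', _⟩ :=
      extend hpos hadd u hu Gm hmonoGm haddGm h00m h01m z
    have hG'S : G' ∈ S := ⟨hGmS.1.trans hsub, hm', ha'⟩
    have : G' ⊆ Gm := hGmmax.2 hG'S hsub
    exact hz t (this hzt)
  choose f hf using htot
  have hfun : ∀ z r, (z, r) ∈ Gm → f z = r := by
    intro z r h
    exact le_antisymm (hmonoGm _ (hf z) _ h (r_refl z)) (hmonoGm _ h _ (hf z) (r_refl z))
  have hs : f ∈ StateSpace M u := by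
    refine ⟨hfun 0 0 h00m, ?_, ?_, hfun u 1 h01m⟩
    · intro a b
      exact hfun _ _ (haddGm _ (hf a) _ (hf b))
    · intro a b hab
      exact hmonoGm _ (hf a) _ (hf b) (r_of_le hadd hab)
  have hfx : f x = t₁ := hfun x t₁ (hGm₁ hx₁)
  have hfu : f u = 1 := hfun u 1 h01m
  have := hx f hs
  rw [hfx, hfu] at this
  linarith only [this, ht₁]
end
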